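/- arXiv:2508.00389 — 3 statements merged into one kernel-verified Lean document; each statement's English description precedes it below -/
import Mathlib

section
/- Let f_1, …, f_p be nonzero elements of ℓ²(Λ, M_n) and let b₀ > 0 be such that ‖F(f_j)(x)‖_{M_n} ≤ b₀ for almost every x ∈ Ω and every j ∈ {1,…,p}. Then the system {D_{2Nλ} f_j : λ ∈ Λ, 1 ≤ j ≤ p} is a matrix-valued discrete Bessel sequence of non-uniform shifts with Bessel bound 2^{p−1} b₀² n², i.e. ∑_{j=1}^p ∑_{λ∈Λ} |⟨f, D_{2Nλ} f_j⟩|² ≤ 2^{p−1} b₀² n² ‖f‖² for every f ∈ ℓ²(Λ, M_n). -/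
open MeasureTheory Complex Real Classical

noncomputable section

/-- The non-uniform translation set `Λ = {0, r/N} + 2ℤ`. -/
def LambdaSet (N r : ℕ) : Set ℝ :=
  {x | ∃ z : ℤ, x = 2 * (z : ℝ) ∨ x = (r : ℝ) / (N : ℝ) + 2 * (z : ℝ)}

/-- The spectral set `Ω = [0, 1/2) ∪ [N/2, (N+1)/2)`. -/
def OmegaSet (N : ℕ) : Set ℝ :=
  Set.Ico (0 : ℝ) (1 / 2) ∪ Set.Ico ((N : ℝ) / 2) (((N : ℝ) + 1) / 2)

/-- `n × n` complex matrices. -/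
abbrev Mat (n : ℕ) := Matrix (Fin n) (Fin n) ℂ

/-- Frobenius norm of a complex matrix. -/
def frobNorm {n : ℕ} (A : Mat n) : ℝ :=
  Real.sqrt (∑ m, ∑ k, ‖A m k‖ ^ 2)

/-- Membership in `ℓ²(Λ, M_n)`. -/
def MemL2 {n : ℕ} (N r : ℕ) (f : LambdaSet N r → Mat n) : Prop :=
  Summable fun lam : LambdaSet N r => ∑ m, ∑ k, ‖f lam m k‖ ^ 2

/-- Inner product on `ℓ²(Λ, M_n)`: `⟨f, g⟩ = ∑_λ tr (f(λ) g(λ)*)`. -/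
def l2inner {n : ℕ} (N r : ℕ) (f g : LambdaSet N r → Mat n) : ℂ :=
  ∑' lam : LambdaSet N r, ∑ m, ∑ k, f lam m k * (starRingEnd ℂ) (g lam m k)

/-- Squared norm on `ℓ²(Λ, M_n)`. -/
def l2normSq {n : ℕ} (N r : ℕ) (f : LambdaSet N r → Mat n) : ℝ :=
  ∑' lam : LambdaSet N r, ∑ m, ∑ k, ‖f lam m k‖ ^ 2

/-- The displacement (non-uniform shift) operator `D_{2Nλ} f (λ') = f (λ' - 2Nλ)`. -/
def shift {n : ℕ} (N r : ℕ) (lam : LambdaSet N r) (f : LambdaSet N r → Mat n) :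
    LambdaSet N r → Mat n :=
  fun lam' =>
    if h : ((lam' : ℝ) - 2 * (N : ℝ) * (lam : ℝ)) ∈ LambdaSet N r then f ⟨_, h⟩ else 0

/-- `F : ℝ → M_n` represents the Fourier transform of `f ∈ ℓ²(Λ, M_n)`:  each entry of `F`
is in `L²(Ω)` and the inversion formula `f(λ)_{m,k} = ∫_Ω F_{m,k}(x) e^{-2πiλx} dx` holds.
Since `{e^{2πiλ·}}_{λ ∈ Λ}` is an orthonormal basis of `L²(Ω)`, this determines `F`
uniquely up to a.e. equality. -/
def IsFT {n : ℕ} (N r : ℕ) (f : LambdaSet N r → Mat n) (F : ℝ → Mat n) : Prop :=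
  (∀ m k, MemLp (fun x => F x m k) 2 (volume.restrict (OmegaSet N))) ∧
  ∀ (lam : LambdaSet N r) (m k : Fin n),
    f lam m k =
      ∫ x in OmegaSet N, F x m k * Complex.exp (((-(2 * π * (lam : ℝ) * x) : ℝ) : ℂ) * Complex.I)

/-- The quantity `∑_{j=1}^p ∑_{λ ∈ Λ} |⟨f, D_{2Nλ} f_j⟩|²`. -/
def besselSum {n : ℕ} (N r p : ℕ) (fs : Fin p → (LambdaSet N r → Mat n))
    (f : LambdaSet N r → Mat n) : ℝ :=
  ∑ j, ∑' lam : LambdaSet N r, ‖l2inner N r f (shift N r lam (fs j))‖ ^ 2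

end
noncomputable section

open scoped ENNReal

namespace BA

lemma measurableSet_omega (N : ℕ) : MeasurableSet (OmegaSet N) :=
  measurableSet_Ico.union measurableSet_Ico

instance (N : ℕ) : IsFiniteMeasure (volume.restrict (OmegaSet N)) := by
  constructor
  rw [Measure.restrict_apply_univ]
  refine lt_of_le_of_lt (measure_union_le _ _) ?_
  rw [Real.volume_Ico, Real.volume_Ico]
  exact ENNReal.add_lt_top.mpr ⟨ENNReal.ofReal_lt_top, ENNReal.ofReal_lt_top⟩

lemma omega_disjoint {N : ℕ} (hN : 1 ≤ N) :
    Disjoint (Set.Ico (0 : ℝ) (1 / 2)) (Set.Ico ((N : ℝ) / 2) (((N : ℝ) + 1) / 2)) := by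
  rw [Set.Ico_disjoint_Ico]
  have : (1 : ℝ) ≤ (N : ℝ) := by exact_mod_cast hN
  refine le_trans (min_le_left _ _) (le_trans ?_ (le_max_right _ _))
  linarith

lemma omega_volume {N : ℕ} (hN : 1 ≤ N) : volume (OmegaSet N) = 1 := by
  rw [OmegaSet, measure_union (omega_disjoint hN) measurableSet_Ico,
    Real.volume_Ico, Real.volume_Ico]
  rw [show (1:ℝ)/2 - 0 = 1/2 by norm_num, show ((N:ℝ)+1)/2 - (N:ℝ)/2 = 1/2 by ring]
  rw [← ENNReal.ofReal_add (by norm_num) (by norm_num)]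
  norm_num

def eFun (t : ℝ) : ℝ → ℂ := fun x => Complex.exp (((2 * π * t * x : ℝ) : ℂ) * Complex.I)

lemma eFun_norm (t x : ℝ) : ‖eFun t x‖ = 1 := by
  simp only [eFun, Complex.norm_exp_ofReal_mul_I]

lemma continuous_eFun (t : ℝ) : Continuous (eFun t) := by
  unfold eFun; fun_prop

lemma eFun_memℒp (N : ℕ) (t : ℝ) : MemLp (eFun t) 2 (volume.restrict (OmegaSet N)) :=
  MemLp.of_bound (continuous_eFun t).aestronglyMeasurable 1
    (ae_of_all _ fun x => le_of_eq (eFun_norm t x))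

def eL (N : ℕ) (t : ℝ) : Lp ℂ 2 (volume.restrict (OmegaSet N)) :=
  (eFun_memℒp N t).toLp (eFun t)

lemma integral_eFun_Ico {t : ℝ} (ht : t ≠ 0) (a b : ℝ) (hab : a ≤ b) :
    ∫ x in Set.Ico a b, eFun t x =
      (Complex.exp ((2 * π * t * Complex.I) * b) - Complex.exp ((2 * π * t * Complex.I) * a))
        / (2 * π * t * Complex.I) := by
  have hc : (2 * π * t * Complex.I : ℂ) ≠ 0 := by
    simp [Complex.ext_iff, Real.pi_ne_zero, ht]
  have h1 : ∫ x in Set.Ico a b, eFun t x = ∫ x in a..b, eFun t x := by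
    rw [intervalIntegral.integral_of_le hab,
      show volume.restrict (Set.Ico a b) = volume.restrict (Set.Ioc a b) from
        Measure.restrict_congr_set Ico_ae_eq_Ioc]
  rw [h1]
  have h2 : ∀ x : ℝ, eFun t x = Complex.exp ((2 * π * t * Complex.I) * x) := by
    intro x; unfold eFun; congr 1; push_cast; ring
  simp_rw [h2]
  exact integral_exp_mul_complex hc
lemma exp_odd_pi_mul_I {k : ℤ} (hk : Odd k) : Complex.exp ((k : ℂ) * (π * Complex.I)) = -1 := by
  obtain ⟨j, hj⟩ := hk
  have : ((k : ℂ)) * (π * Complex.I) = (j : ℤ) * (2 * π * Complex.I) + π * Complex.I := by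
    rw [hj]; push_cast; ring
  rw [this, Complex.exp_add, Complex.exp_int_mul_two_pi_mul_I, Complex.exp_pi_mul_I]
  ring

lemma integrableOn_eFun (t : ℝ) (a b : ℝ) : IntegrableOn (eFun t) (Set.Ico a b) volume := by
  exact ((continuous_eFun t).integrableOn_Icc).mono_set Set.Ico_subset_Icc_self

lemma integral_eFun_omega_zero {N r : ℕ} (hN : 1 ≤ N) (hr_odd : Odd r) {t : ℝ} (ht : t ≠ 0)
    (hcase : (∃ m : ℤ, t = 2 * m) ∨ (∃ m : ℤ, t = r / (N : ℝ) + 2 * m) ∨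
      (∃ m : ℤ, t = -(r / (N : ℝ)) + 2 * m)) :
    ∫ x in OmegaSet N, eFun t x = 0 := by
  have hNR : (N : ℝ) ≠ 0 := by positivity
  have hc : (2 * π * t * Complex.I : ℂ) ≠ 0 := by
    simp [Complex.ext_iff, Real.pi_ne_zero, ht]
  have h12 : (0:ℝ) ≤ 1/2 := by norm_num
  have hNN : ((N:ℝ))/2 ≤ ((N:ℝ)+1)/2 := by linarith
  rw [OmegaSet, setIntegral_union (omega_disjoint hN) measurableSet_Ico
    (integrableOn_eFun t _ _) (integrableOn_eFun t _ _),
    integral_eFun_Ico ht _ _ h12, integral_eFun_Ico ht _ _ hNN]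
  set c : ℂ := 2 * π * t * Complex.I with hcdef
  have key : (Complex.exp (c * (1/2:ℝ)) - Complex.exp (c * (0:ℝ)))
      + (Complex.exp (c * (((((N:ℝ)+1)/2 : ℝ)) : ℂ)) - Complex.exp (c * ((((N:ℝ)/2 : ℝ)) : ℂ))) =
      (1 + Complex.exp (c * ((((N:ℝ)/2 : ℝ)) : ℂ))) * (Complex.exp (c * (1/2:ℝ)) - 1) := by
    have : c * (((((N:ℝ)+1)/2 : ℝ)) : ℂ) = c * ((((N:ℝ)/2 : ℝ)) : ℂ) + c * (1/2:ℝ) := by push_cast; ring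
    rw [this, Complex.exp_add]
    simp only [Complex.ofReal_zero, mul_zero, Complex.exp_zero]
    ring
  rw [← add_div, key]
  rcases hcase with ⟨m, hm⟩ | hcase
  · -- t = 2m : second factor vanishes
    have : c * (1/2:ℝ) = (m : ℤ) * (2 * π * Complex.I) := by
      rw [hcdef, hm]; push_cast; ring
    rw [this, Complex.exp_int_mul_two_pi_mul_I]
    simp
  · -- t = ±r/N + 2m : first factor vanishes
    have hfact : ∃ k : ℤ, Odd k ∧ c * ((((N:ℝ)/2 : ℝ)) : ℂ) = (k : ℂ) * (π * Complex.I) := by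
      rcases hcase with ⟨m, hm⟩ | ⟨m, hm⟩
      · refine ⟨(r : ℤ) + 2 * m * N, ?_, ?_⟩
        · rcases hr_odd with ⟨s, hs⟩
          exact ⟨(s : ℤ) + m * N, by push_cast [hs]; ring⟩
        · have hNC : (N:ℂ) ≠ 0 := by exact_mod_cast hNR
          rw [hcdef, hm]
          push_cast
          field_simp
      · refine ⟨-(r : ℤ) + 2 * m * N, ?_, ?_⟩
        · rcases hr_odd with ⟨s, hs⟩
          exact ⟨-(s:ℤ) + m * N - 1, by push_cast [hs]; ring⟩
        · have hNC : (N:ℂ) ≠ 0 := by exact_mod_cast hNR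
          rw [hcdef, hm]
          push_cast
          field_simp
    obtain ⟨k, hk_odd, hk⟩ := hfact
    rw [hk, exp_odd_pi_mul_I hk_odd]
    simp
lemma eFun_conj_mul (s t x : ℝ) : (starRingEnd ℂ) (eFun s x) * eFun t x = eFun (t - s) x := by
  unfold eFun
  rw [← Complex.exp_conj, ← Complex.exp_add]
  congr 1
  simp only [map_mul, Complex.conj_ofReal, Complex.conj_I]
  push_cast; ring

lemma inner_eL (N : ℕ) (s t : ℝ) :
    (inner ℂ (eL N s) (eL N t) : ℂ) = ∫ x in OmegaSet N, eFun (t - s) x := by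
  rw [MeasureTheory.L2.inner_def]
  refine integral_congr_ae ?_
  filter_upwards [(eFun_memℒp N s).coeFn_toLp, (eFun_memℒp N t).coeFn_toLp] with x hx hy
  rw [show ((eL N s : Lp ℂ 2 (volume.restrict (OmegaSet N))) : ℝ → ℂ) x = eFun s x from hx,
    show ((eL N t : Lp ℂ 2 (volume.restrict (OmegaSet N))) : ℝ → ℂ) x = eFun t x from hy]
  rw [RCLike.inner_apply']
  exact eFun_conj_mul s t x

lemma orthonormal_eL {N r : ℕ} (hN : 1 ≤ N) (hr_odd : Odd r) :
    Orthonormal ℂ (fun lam : LambdaSet N r => eL N lam.1) := by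
  rw [orthonormal_iff_ite]
  intro i j
  rw [inner_eL N i.1 j.1]
  by_cases h : i = j
  · subst h
    rw [if_pos rfl, sub_self]
    have h1 : ∀ x : ℝ, eFun 0 x = 1 := by
      intro x; unfold eFun; norm_num
    simp only [h1]
    rw [setIntegral_const]
    rw [measureReal_def, omega_volume hN]
    simp
  · rw [if_neg h]
    have hij : (i : ℝ) ≠ (j : ℝ) := fun hv => h (Subtype.ext hv)
    refine integral_eFun_omega_zero hN hr_odd (sub_ne_zero.mpr (Ne.symm hij)) ?_
    obtain ⟨z, hz | hz⟩ := i.2 <;> obtain ⟨w, hw | hw⟩ := j.2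
    · exact Or.inl ⟨w - z, by rw [hw, hz]; push_cast; ring⟩
    · exact Or.inr (Or.inl ⟨w - z, by rw [hw, hz]; push_cast; ring⟩)
    · exact Or.inr (Or.inr ⟨w - z, by rw [hw, hz]; push_cast; ring⟩)
    · exact Or.inl ⟨w - z, by rw [hw, hz]; push_cast; ring⟩

lemma exists_twoN {N r : ℕ} (hN : 1 ≤ N) (lam : LambdaSet N r) :
    ∃ k : ℤ, 2 * (N : ℝ) * lam.1 = 2 * (k : ℝ) := by
  have hNR : (N : ℝ) ≠ 0 := by positivity
  obtain ⟨z, hz | hz⟩ := lam.2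
  · exact ⟨2 * (N : ℤ) * z, by rw [hz]; push_cast; ring⟩
  · refine ⟨(r : ℤ) + 2 * (N : ℤ) * z, ?_⟩
    rw [hz]; push_cast; field_simp

lemma sub_twoN_mem {N r : ℕ} (hN : 1 ≤ N) (lam lam' : LambdaSet N r) :
    ((lam' : ℝ) - 2 * (N : ℝ) * (lam : ℝ)) ∈ LambdaSet N r := by
  obtain ⟨k, hk⟩ := exists_twoN hN lam
  obtain ⟨z, hz | hz⟩ := lam'.2
  · exact ⟨z - k, Or.inl (by rw [hz, hk]; push_cast; ring)⟩
  · exact ⟨z - k, Or.inr (by rw [hz, hk]; push_cast; ring)⟩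

lemma twoN_mem {N r : ℕ} (hN : 1 ≤ N) (lam : LambdaSet N r) :
    (2 * (N : ℝ) * (lam : ℝ)) ∈ LambdaSet N r := by
  obtain ⟨k, hk⟩ := exists_twoN hN lam
  exact ⟨k, Or.inl hk⟩
section Abstract

variable {ι : Type*} {E : Type*} [NormedAddCommGroup E] [InnerProductSpace ℂ E] [CompleteSpace E]

lemma summable_rpow_of_sq {a : ι → ℂ} (ha : Summable fun i => ‖a i‖ ^ 2) :
    Summable fun i => ‖a i‖ ^ (2 : ℝ≥0∞).toReal := by
  have h2 : (2 : ℝ≥0∞).toReal = (2 : ℝ) := by norm_num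
  rw [h2]
  convert ha using 2 with i
  rw [show (2:ℝ) = ((2:ℕ):ℝ) by norm_num, Real.rpow_natCast]

lemma exists_hasSum_orthonormal {e : ι → E} (he : Orthonormal ℂ e) {a : ι → ℂ}
    (ha : Summable fun i => ‖a i‖ ^ 2) :
    ∃ u : E, HasSum (fun i => a i • e i) u ∧ ‖u‖ ^ 2 = ∑' i, ‖a i‖ ^ 2 := by
  have hmem : Memℓp a 2 := memℓp_gen (summable_rpow_of_sq ha)
  set A : lp (fun _ : ι => ℂ) 2 := ⟨a, hmem⟩ with hA
  have hOF := he.orthogonalFamily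
  refine ⟨hOF.linearIsometry A, ?_, ?_⟩
  · have h := hOF.hasSum_linearIsometry A
    convert h using 2 with i
    rfl
  · have hnorm : ‖hOF.linearIsometry A‖ = ‖A‖ := hOF.linearIsometry.norm_map A
    rw [hnorm]
    have h2 : (0:ℝ) < (2 : ℝ≥0∞).toReal := by norm_num
    have := lp.norm_rpow_eq_tsum h2 A
    have h2' : (2 : ℝ≥0∞).toReal = (2 : ℝ) := by norm_num
    rw [h2'] at this
    have hcast : ∀ x : ℝ, x ^ (2:ℝ) = x ^ (2:ℕ) := fun x => by
      rw [show (2:ℝ) = ((2:ℕ):ℝ) by norm_num, Real.rpow_natCast]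
    rw [hcast] at this
    simp only [hcast] at this
    rw [← this]

end Abstract
lemma eFun_conj (s x : ℝ) : (starRingEnd ℂ) (eFun s x) = eFun (-s) x := by
  unfold eFun
  rw [← Complex.exp_conj]
  congr 1
  simp only [map_mul, Complex.conj_ofReal, Complex.conj_I]
  push_cast; ring

lemma exp_neg_eq_eFun (lam x : ℝ) :
    Complex.exp (((-(2 * π * lam * x) : ℝ) : ℂ) * Complex.I) = eFun (-lam) x := by
  unfold eFun; congr 1; push_cast; ring

lemma coeFn_lp_sum {α : Type*} {m0 : MeasurableSpace α} {μ : Measure α} {κ : Type*}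
    (s : Finset κ) (F : κ → Lp ℂ 2 μ) :
    (↑(∑ i ∈ s, F i) : α → ℂ) =ᵐ[μ] fun x => ∑ i ∈ s, (F i : α → ℂ) x := by
  classical
  induction s using Finset.cons_induction with
  | empty => simp only [Finset.sum_empty]; exact Lp.coeFn_zero ℂ 2 μ
  | cons a s ha ih =>
    rw [Finset.sum_cons]
    filter_upwards [Lp.coeFn_add (F a) (∑ i ∈ s, F i), ih] with x hx hx2
    rw [hx]
    simp only [Pi.add_apply, hx2, Finset.sum_cons]

lemma eL_coe (N : ℕ) (t : ℝ) :
    ((eL N t : Lp ℂ 2 (volume.restrict (OmegaSet N))) : ℝ → ℂ)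
      =ᵐ[volume.restrict (OmegaSet N)] eFun t :=
  (eFun_memℒp N t).coeFn_toLp

lemma entry_summable {N r n : ℕ} {f : LambdaSet N r → Mat n} (hf : MemL2 N r f) (m k : Fin n) :
    Summable fun lam => ‖f lam m k‖ ^ 2 := by
  refine Summable.of_nonneg_of_le (fun lam => by positivity) (fun lam => ?_) hf
  calc ‖f lam m k‖ ^ 2 ≤ ∑ k', ‖f lam m k'‖ ^ 2 :=
        Finset.single_le_sum (f := fun k' => ‖f lam m k'‖ ^ 2)
          (fun k' _ => by positivity) (Finset.mem_univ k)
    _ ≤ ∑ m', ∑ k', ‖f lam m' k'‖ ^ 2 :=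
        Finset.single_le_sum (f := fun m' => ∑ k', ‖f lam m' k'‖ ^ 2)
          (fun m' _ => by positivity) (Finset.mem_univ m)

lemma entry_le_frob {n : ℕ} (A : Mat n) (m k : Fin n) : ‖A m k‖ ≤ frobNorm A := by
  rw [frobNorm, show ‖A m k‖ = Real.sqrt (‖A m k‖ ^ 2) by rw [Real.sqrt_sq (norm_nonneg _)]]
  refine Real.sqrt_le_sqrt ?_
  calc ‖A m k‖ ^ 2 ≤ ∑ k', ‖A m k'‖ ^ 2 :=
        Finset.single_le_sum (f := fun k' => ‖A m k'‖ ^ 2)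
          (fun k' _ => by positivity) (Finset.mem_univ k)
    _ ≤ ∑ m', ∑ k', ‖A m' k'‖ ^ 2 :=
        Finset.single_le_sum (f := fun m' => ∑ k', ‖A m' k'‖ ^ 2)
          (fun m' _ => by positivity) (Finset.mem_univ m)
lemma per_j {N r n : ℕ} (hN : 1 ≤ N) (hr_odd : Odd r)
    (g : LambdaSet N r → Mat n)
    (G : ℝ → Mat n) (hGmem : ∀ m k, MemLp (fun x => G x m k) 2 (volume.restrict (OmegaSet N)))
    (hGft : ∀ (lam : LambdaSet N r) (m k : Fin n), g lam m k =
      ∫ x in OmegaSet N, G x m k * Complex.exp (((-(2 * π * (lam : ℝ) * x) : ℝ) : ℂ) * Complex.I))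
    {b₀ : ℝ} (hb₀ : 0 ≤ b₀)
    (hGb : ∀ᵐ x ∂(volume.restrict (OmegaSet N)), frobNorm (G x) ≤ b₀)
    (f : LambdaSet N r → Mat n) (hf : MemL2 N r f) :
    ∑' lam : LambdaSet N r, ‖l2inner N r f (shift N r lam g)‖ ^ 2
      ≤ b₀ ^ 2 * (n : ℝ) ^ 2 * l2normSq N r f := by
  have h_on := orthonormal_eL (N := N) (r := r) hN hr_odd
  -- the vectors u m k = ∑' lam, f lam m k • e lam
  have hex : ∀ m k : Fin n,
      ∃ v, HasSum (fun lam : LambdaSet N r => f lam m k • eL N lam.1) v ∧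
        ‖v‖ ^ 2 = ∑' lam : LambdaSet N r, ‖f lam m k‖ ^ 2 :=
    fun m k => exists_hasSum_orthonormal h_on (entry_summable hf m k)
  choose u hu hunorm using hex
  -- entrywise bound on G
  have hGb' : ∀ m k : Fin n, ∀ᵐ x ∂(volume.restrict (OmegaSet N)), ‖G x m k‖ ≤ b₀ := by
    intro m k
    filter_upwards [hGb] with x hx
    exact (entry_le_frob (G x) m k).trans hx
  have hGm : ∀ m k : Fin n,
      AEStronglyMeasurable (fun x => (starRingEnd ℂ) (G x m k)) (volume.restrict (OmegaSet N)) :=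
    fun m k => (RCLike.continuous_conj (K := ℂ)).comp_aestronglyMeasurable
      (hGmem m k).aestronglyMeasurable
  -- the terms conj (G x m k) * u m k x
  have hterm_mem : ∀ m k : Fin n,
      MemLp (fun x => (starRingEnd ℂ) (G x m k) * (u m k : ℝ → ℂ) x) 2
        (volume.restrict (OmegaSet N)) := by
    intro m k
    refine MemLp.of_le ((Lp.memLp (u m k)).const_mul (b₀ : ℂ))
      ((hGm m k).mul (Lp.aestronglyMeasurable (u m k))) ?_
    filter_upwards [hGb' m k] with x hx
    rw [norm_mul, norm_mul, RCLike.norm_conj, Complex.norm_real, Real.norm_of_nonneg hb₀]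
    exact mul_le_mul_of_nonneg_right hx (norm_nonneg _)
  set H : Lp ℂ 2 (volume.restrict (OmegaSet N)) :=
    ∑ mk : Fin n × Fin n, (hterm_mem mk.1 mk.2).toLp _ with hHdef
  have hHcoe : (H : ℝ → ℂ) =ᵐ[volume.restrict (OmegaSet N)]
      fun x => ∑ mk : Fin n × Fin n,
        (starRingEnd ℂ) (G x mk.1 mk.2) * (u mk.1 mk.2 : ℝ → ℂ) x := by
    refine (coeFn_lp_sum Finset.univ _).trans ?_
    have hall : ∀ᵐ x ∂(volume.restrict (OmegaSet N)), ∀ mk : Fin n × Fin n,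
        ((hterm_mem mk.1 mk.2).toLp _ : ℝ → ℂ) x
          = (starRingEnd ℂ) (G x mk.1 mk.2) * (u mk.1 mk.2 : ℝ → ℂ) x :=
      (ae_all_iff).2 fun mk => (hterm_mem mk.1 mk.2).coeFn_toLp
    filter_upwards [hall] with x hx
    exact Finset.sum_congr rfl fun mk _ => hx mk
  -- the key identity
  have key : ∀ lam : LambdaSet N r,
      l2inner N r f (shift N r lam g)
        = (inner ℂ (eL N (2 * (N : ℝ) * (lam : ℝ))) H : ℂ) := by
    intro lam
    set T : ℝ := 2 * (N : ℝ) * (lam : ℝ) with hT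
    have hsubmem : ∀ lam' : LambdaSet N r, ((lam' : ℝ) - T) ∈ LambdaSet N r :=
      fun lam' => sub_twoN_mem hN lam lam'
    have hw_mem : ∀ m k : Fin n,
        MemLp (fun x => G x m k * eFun T x) 2 (volume.restrict (OmegaSet N)) := by
      intro m k
      refine MemLp.of_le (hGmem m k)
        ((hGmem m k).aestronglyMeasurable.mul (continuous_eFun T).aestronglyMeasurable) ?_
      refine ae_of_all _ fun x => ?_
      rw [norm_mul, eFun_norm, mul_one]
    have A1 : ∀ (m k : Fin n) (lam' : LambdaSet N r),
        (inner ℂ ((hw_mem m k).toLp _) (eL N (lam' : ℝ)) : ℂ)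
          = (starRingEnd ℂ) (g ⟨(lam' : ℝ) - T, hsubmem lam'⟩ m k) := by
      intro m k lam'
      rw [MeasureTheory.L2.inner_def, hGft ⟨(lam' : ℝ) - T, hsubmem lam'⟩ m k, ← integral_conj]
      refine integral_congr_ae ?_
      filter_upwards [(hw_mem m k).coeFn_toLp, eL_coe N (lam' : ℝ)]
        with x hx hy
      rw [RCLike.inner_apply', hx, hy]
      calc (starRingEnd ℂ) (G x m k * eFun T x) * eFun (lam' : ℝ) x
          = (starRingEnd ℂ) (G x m k) * ((starRingEnd ℂ) (eFun T x) * eFun (lam' : ℝ) x) := by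
            rw [map_mul]; ring
        _ = (starRingEnd ℂ) (G x m k) * eFun ((lam' : ℝ) - T) x := by rw [eFun_conj_mul]
        _ = (starRingEnd ℂ) (G x m k * eFun (-((lam' : ℝ) - T)) x) := by
            rw [map_mul, eFun_conj, neg_neg]
        _ = (starRingEnd ℂ) (G x m k *
              Complex.exp (((-(2 * π * ((lam' : ℝ) - T) * x) : ℝ) : ℂ) * Complex.I)) := by
            rw [exp_neg_eq_eFun]
    have A2 : ∀ m k : Fin n,
        HasSum (fun lam' : LambdaSet N r =>
            f lam' m k * (starRingEnd ℂ) (g ⟨(lam' : ℝ) - T, hsubmem lam'⟩ m k))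
          (inner ℂ ((hw_mem m k).toLp _) (u m k) : ℂ) := by
      intro m k
      have h := (hu m k).mapL (innerSL ℂ ((hw_mem m k).toLp _))
      have heq : (fun lam' : LambdaSet N r =>
          (innerSL ℂ ((hw_mem m k).toLp _)) (f lam' m k • eL N (lam' : ℝ)))
          = fun lam' : LambdaSet N r =>
            f lam' m k * (starRingEnd ℂ) (g ⟨(lam' : ℝ) - T, hsubmem lam'⟩ m k) := by
        funext lam'
        rw [innerSL_apply_apply, inner_smul_right, A1 m k lam']
      rw [heq] at h
      rw [show ((innerSL ℂ ((hw_mem m k).toLp _)) (u m k))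
          = (inner ℂ ((hw_mem m k).toLp _) (u m k) : ℂ) from innerSL_apply_apply _ _ _] at h
      exact h
    -- integrability of each term of the inner-product expansion
    have hInt : ∀ m k : Fin n,
        Integrable (fun x => (starRingEnd ℂ) (eFun T x) *
            ((starRingEnd ℂ) (G x m k) * (u m k : ℝ → ℂ) x))
          (volume.restrict (OmegaSet N)) := by
      intro m k
      refine Integrable.mono'
        ((((Lp.memLp (u m k)).integrable one_le_two).norm.const_mul b₀)) ?_ ?_
      · exact (((RCLike.continuous_conj (K := ℂ)).comp
            (continuous_eFun T)).aestronglyMeasurable).mul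
          ((hGm m k).mul (Lp.aestronglyMeasurable (u m k)))
      · filter_upwards [hGb' m k] with x hx
        rw [norm_mul, norm_mul, RCLike.norm_conj, eFun_norm, one_mul, RCLike.norm_conj]
        exact mul_le_mul_of_nonneg_right hx (norm_nonneg _)
    have A3 : (inner ℂ (eL N T) H : ℂ)
        = ∑ mk : Fin n × Fin n, (inner ℂ ((hw_mem mk.1 mk.2).toLp _) (u mk.1 mk.2) : ℂ) := by
      rw [MeasureTheory.L2.inner_def]
      have hcongr : ∫ x, (inner ℂ ((eL N T : ℝ → ℂ) x) ((H : ℝ → ℂ) x) : ℂ)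
            ∂(volume.restrict (OmegaSet N))
          = ∫ x, ∑ mk : Fin n × Fin n, (starRingEnd ℂ) (eFun T x) *
              ((starRingEnd ℂ) (G x mk.1 mk.2) * (u mk.1 mk.2 : ℝ → ℂ) x)
            ∂(volume.restrict (OmegaSet N)) := by
        refine integral_congr_ae ?_
        filter_upwards [eL_coe N T, hHcoe] with x hx hy
        rw [RCLike.inner_apply', hx, hy, Finset.mul_sum]
      rw [hcongr, integral_finset_sum _ (fun mk _ => hInt mk.1 mk.2)]
      refine Finset.sum_congr rfl fun mk _ => ?_
      rw [MeasureTheory.L2.inner_def]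
      refine integral_congr_ae ?_
      filter_upwards [(hw_mem mk.1 mk.2).coeFn_toLp] with x hx
      rw [RCLike.inner_apply', hx, map_mul]
      ring
    have A4 : l2inner N r f (shift N r lam g)
        = ∑ mk : Fin n × Fin n, ∑' lam' : LambdaSet N r,
            f lam' mk.1 mk.2 * (starRingEnd ℂ) (g ⟨(lam' : ℝ) - T, hsubmem lam'⟩ mk.1 mk.2) := by
      rw [l2inner]
      have h1 : ∀ lam' : LambdaSet N r,
          (∑ m, ∑ k, f lam' m k * (starRingEnd ℂ) ((shift N r lam g) lam' m k))
            = ∑ mk : Fin n × Fin n,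
                f lam' mk.1 mk.2 *
                  (starRingEnd ℂ) (g ⟨(lam' : ℝ) - T, hsubmem lam'⟩ mk.1 mk.2) := by
        intro lam'
        rw [Fintype.sum_prod_type]
        refine Finset.sum_congr rfl fun m _ => Finset.sum_congr rfl fun k _ => ?_
        congr 2
        rw [shift, dif_pos (hsubmem lam')]
      simp_rw [h1]
      exact Summable.tsum_finsetSum fun mk _ => (A2 mk.1 mk.2).summable
    rw [A4, A3]
    exact Finset.sum_congr rfl fun mk _ => (A2 mk.1 mk.2).tsum_eq
  -- Bessel inequality step
  have hmuT_mem : ∀ lam : LambdaSet N r, (2 * (N : ℝ) * (lam : ℝ)) ∈ LambdaSet N r :=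
    fun lam => twoN_mem hN lam
  set muT : LambdaSet N r → LambdaSet N r := fun lam => ⟨_, hmuT_mem lam⟩ with hmuT
  have hinj : Function.Injective muT := by
    intro a b hab
    have h1 : 2 * (N : ℝ) * (a : ℝ) = 2 * (N : ℝ) * (b : ℝ) := congrArg Subtype.val hab
    have hN0 : (2 * (N : ℝ)) ≠ 0 := by positivity
    exact Subtype.ext (mul_left_cancel₀ hN0 h1)
  have hbessel : ∑' lam : LambdaSet N r, ‖l2inner N r f (shift N r lam g)‖ ^ 2 ≤ ‖H‖ ^ 2 := by
    have hs : Summable fun i : LambdaSet N r => ‖(inner ℂ (eL N (i : ℝ)) H : ℂ)‖ ^ 2 :=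
      h_on.inner_products_summable H
    calc ∑' lam : LambdaSet N r, ‖l2inner N r f (shift N r lam g)‖ ^ 2
        = ∑' lam : LambdaSet N r, ‖(inner ℂ (eL N ((muT lam : LambdaSet N r) : ℝ)) H : ℂ)‖ ^ 2 :=
          tsum_congr fun lam => by rw [key lam]
      _ ≤ ∑' i : LambdaSet N r, ‖(inner ℂ (eL N (i : ℝ)) H : ℂ)‖ ^ 2 :=
          (hs.comp_injective hinj).tsum_le_tsum_of_inj muT hinj (fun c _ => by positivity)
            (fun lam => le_rfl) hs
      _ ≤ ‖H‖ ^ 2 := h_on.tsum_inner_products_le H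
  -- norm bound on H
  have hterm_norm : ∀ m k : Fin n, ‖(hterm_mem m k).toLp _‖ ≤ b₀ * ‖u m k‖ := by
    intro m k
    refine Lp.norm_le_mul_norm_of_ae_le_mul ?_
    filter_upwards [(hterm_mem m k).coeFn_toLp, hGb' m k] with x hx hb
    rw [hx, norm_mul, RCLike.norm_conj]
    exact mul_le_mul_of_nonneg_right hb (norm_nonneg _)
  have hHnorm : ‖H‖ ≤ ∑ mk : Fin n × Fin n, b₀ * ‖u mk.1 mk.2‖ := by
    rw [hHdef]
    refine (norm_sum_le _ _).trans ?_
    exact Finset.sum_le_sum fun mk _ => hterm_norm mk.1 mk.2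
  have hsq : ‖H‖ ^ 2 ≤ (n : ℝ) ^ 2 * ∑ mk : Fin n × Fin n, (b₀ * ‖u mk.1 mk.2‖) ^ 2 := by
    calc ‖H‖ ^ 2 ≤ (∑ mk : Fin n × Fin n, b₀ * ‖u mk.1 mk.2‖) ^ 2 := by
          refine pow_le_pow_left₀ (norm_nonneg H) hHnorm 2
      _ ≤ (Finset.univ.card : ℝ) * ∑ mk : Fin n × Fin n, (b₀ * ‖u mk.1 mk.2‖) ^ 2 :=
          sq_sum_le_card_mul_sum_sq
      _ = (n : ℝ) ^ 2 * ∑ mk : Fin n × Fin n, (b₀ * ‖u mk.1 mk.2‖) ^ 2 := by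
          congr 1
          rw [Finset.card_univ, Fintype.card_prod, Fintype.card_fin]
          push_cast; ring
  have hl2 : ∑ mk : Fin n × Fin n, ∑' lam : LambdaSet N r, ‖f lam mk.1 mk.2‖ ^ 2
      = l2normSq N r f := by
    rw [l2normSq, ← Summable.tsum_finsetSum fun (mk : Fin n × Fin n) _ => entry_summable hf mk.1 mk.2]
    exact tsum_congr fun lam => Fintype.sum_prod_type (fun mk => ‖f lam mk.1 mk.2‖ ^ 2)
  calc ∑' lam : LambdaSet N r, ‖l2inner N r f (shift N r lam g)‖ ^ 2
      ≤ ‖H‖ ^ 2 := hbessel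
    _ ≤ (n : ℝ) ^ 2 * ∑ mk : Fin n × Fin n, (b₀ * ‖u mk.1 mk.2‖) ^ 2 := hsq
    _ = b₀ ^ 2 * (n : ℝ) ^ 2 * ∑ mk : Fin n × Fin n, ‖u mk.1 mk.2‖ ^ 2 := by
        rw [Finset.mul_sum, Finset.mul_sum]
        refine Finset.sum_congr rfl fun mk _ => by ring
    _ = b₀ ^ 2 * (n : ℝ) ^ 2 * l2normSq N r f := by
        rw [← hl2]
        congr 1
        exact Finset.sum_congr rfl fun mk _ => hunorm mk.1 mk.2
end BA


end

/-- Theorem 2.4 / thmM1: if each `F(f_j)` is a.e. bounded by `b₀` in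
Frobenius norm on `Ω`, then the non-uniform shift system is a matrix-valued discrete Bessel
sequence with Bessel bound `2^(p-1) b₀² n²`. -/
theorem bessel_of_fourier_bounded
    (N r n p : ℕ) (hN : 1 ≤ N) (hr_odd : Odd r) (hr_cop : Nat.Coprime r N)
    (hr1 : 1 ≤ r) (hr2 : r ≤ 2 * N - 1)
    (fs : Fin p → (LambdaSet N r → Mat n)) (hfs_mem : ∀ j, MemL2 N r (fs j))
    (hfs_ne : ∀ j, fs j ≠ 0)
    (b₀ : ℝ) (hb₀ : 0 < b₀)
    (Fs : Fin p → ℝ → Mat n) (hFT : ∀ j, IsFT N r (fs j) (Fs j))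
    (hbound : ∀ j, ∀ᵐ x ∂(volume.restrict (OmegaSet N)), frobNorm (Fs j x) ≤ b₀) :
    ∀ f : LambdaSet N r → Mat n, MemL2 N r f →
      besselSum N r p fs f ≤ 2 ^ (p - 1) * b₀ ^ 2 * (n : ℝ) ^ 2 * l2normSq N r f := by
  intro f hf
  have hb₀' : 0 ≤ b₀ := hb₀.le
  have hSq : 0 ≤ l2normSq N r f :=
    tsum_nonneg fun lam => Finset.sum_nonneg fun m _ => Finset.sum_nonneg fun k _ => by positivity
  have hper : ∀ j, ∑' lam : LambdaSet N r, ‖l2inner N r f (shift N r lam (fs j))‖ ^ 2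
      ≤ b₀ ^ 2 * (n : ℝ) ^ 2 * l2normSq N r f :=
    fun j => BA.per_j hN hr_odd (fs j) (Fs j) (hFT j).1 (hFT j).2 hb₀' (hbound j) f hf
  have hp : (p : ℝ) ≤ 2 ^ (p - 1) := by
    by_cases hp0 : p = 0
    · subst hp0; norm_num
    · have h2 : p ≤ 2 ^ (p - 1) := by
        have h3 := Nat.lt_two_pow_self (n := p - 1)
        omega
      exact_mod_cast h2
  calc besselSum N r p fs f
      ≤ ∑ _j : Fin p, b₀ ^ 2 * (n : ℝ) ^ 2 * l2normSq N r f :=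
        Finset.sum_le_sum fun j _ => hper j
    _ = (p : ℝ) * (b₀ ^ 2 * (n : ℝ) ^ 2 * l2normSq N r f) := by
        rw [Finset.sum_const, Finset.card_univ, Fintype.card_fin, nsmul_eq_mul]
    _ ≤ 2 ^ (p - 1) * b₀ ^ 2 * (n : ℝ) ^ 2 * l2normSq N r f := by
        have hC : (0 : ℝ) ≤ b₀ ^ 2 * (n : ℝ) ^ 2 * l2normSq N r f := by positivity
        have := mul_le_mul_of_nonneg_right hp hC
        calc (p : ℝ) * (b₀ ^ 2 * (n : ℝ) ^ 2 * l2normSq N r f)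
            ≤ 2 ^ (p - 1) * (b₀ ^ 2 * (n : ℝ) ^ 2 * l2normSq N r f) := this
          _ = 2 ^ (p - 1) * b₀ ^ 2 * (n : ℝ) ^ 2 * l2normSq N r f := by ring
end

section
/- Let f_1, …, f_p ∈ ℓ²(Λ, M_n) and suppose the system {D_{2Nλ} f_j : λ ∈ Λ, 1 ≤ j ≤ p} is a matrix-valued discrete Bessel sequence of non-uniform shifts with Bessel bound b₀. Then for almost every x ∈ Ω and every j ∈ {1,…,p}, ∑_{m,k=1}^n |F(f_j)_{m,k}(x)|² ≤ 4 N b₀; equivalently ‖F(f_j)(x)‖_{M_n} ≤ 2√(N b₀). -/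
open MeasureTheory Complex Real Classical

noncomputable section BPaux
open Set AddCircle
open scoped ENNReal

/-- `e^{-2π i t x}` -/
def enegC (t x : ℝ) : ℂ := Complex.exp (((-(2 * π * t * x) : ℝ) : ℂ) * Complex.I)

lemma enegC_norm (t x : ℝ) : ‖enegC t x‖ = 1 := by
  unfold enegC
  rw [Complex.norm_exp_ofReal_mul_I]

lemma enegC_freq_add (s t x : ℝ) : enegC (s + t) x = enegC s x * enegC t x := by
  unfold enegC
  rw [← Complex.exp_add]
  congr 1
  push_cast
  ring

lemma enegC_arg_add (t x y : ℝ) : enegC t (x + y) = enegC t x * enegC t y := by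
  unfold enegC
  rw [← Complex.exp_add]
  congr 1
  push_cast
  ring

lemma enegC_conj (t x : ℝ) : (starRingEnd ℂ) (enegC t x) = enegC (-t) x := by
  unfold enegC
  rw [← Complex.exp_conj]
  congr 1
  rw [map_mul, Complex.conj_ofReal, Complex.conj_I]
  push_cast
  ring

lemma enegC_mul_conj_self (t x : ℝ) : enegC t x * (starRingEnd ℂ) (enegC t x) = 1 := by
  rw [Complex.mul_conj, Complex.normSq_eq_norm_sq, enegC_norm]
  norm_num

lemma enegC_continuous (t : ℝ) : Continuous (enegC t) := by
  unfold enegC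
  exact Complex.continuous_exp.comp
    ((Complex.continuous_ofReal.comp (by continuity)).mul continuous_const)

lemma enegC_measurable (t : ℝ) : Measurable (enegC t) := (enegC_continuous t).measurable

lemma mul_conj_self_eq (z : ℂ) : z * (starRingEnd ℂ) z = ((‖z‖ ^ 2 : ℝ) : ℂ) := by
  rw [Complex.mul_conj, Complex.normSq_eq_norm_sq]

lemma fourier_neg_eq {T : ℝ} [Fact (0 < T)] (n : ℤ) (x : ℝ) :
    (fourier (-n) (x : AddCircle T) : ℂ) = enegC ((n : ℝ) / T) x := by
  rw [fourier_coe_apply]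
  unfold enegC
  congr 1
  push_cast
  ring

lemma memℒp_mul_enegC {w : ℝ → ℂ} {μ : Measure ℝ} (hwm : Measurable w)
    (hw : MemLp w 2 μ) (t : ℝ) : MemLp (fun x => w x * enegC t x) 2 μ := by
  refine hw.of_le ((hwm.mul (enegC_measurable t)).aestronglyMeasurable) ?_
  filter_upwards with x
  rw [norm_mul, enegC_norm, mul_one]

lemma memℒp_conj {g : ℝ → ℂ} {μ : Measure ℝ} (hgm : Measurable g)
    (hg : MemLp g 2 μ) : MemLp (fun x => (starRingEnd ℂ) (g x)) 2 μ := by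
  refine hg.of_le ((Complex.continuous_conj.measurable.comp hgm).aestronglyMeasurable) ?_
  filter_upwards with x
  rw [RCLike.norm_conj]

lemma integrable_mul_L2 {f g : ℝ → ℂ} {μ : Measure ℝ} (hf : MemLp f 2 μ)
    (hg : MemLp g 2 μ) : Integrable (fun x => f x * g x) μ := by
  have h : (1 : ℝ≥0∞) / 1 = 1 / 2 + 1 / 2 := by
    rw [ENNReal.div_add_div_same, one_add_one_eq_two,
      ENNReal.div_self (by norm_num) ENNReal.ofNat_ne_top]
    exact ENNReal.div_self one_ne_zero ENNReal.one_ne_top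
  have := hg.smul (φ := f) (r := 1) hf (hpqr := ⟨by simp only [← one_div]; exact h.symm⟩)
  rw [memLp_one_iff_integrable] at this
  exact this.congr (by filter_upwards with x; simp [smul_eq_mul])

lemma BP_isFiniteMeasure_Ioc (a b : ℝ) :
    IsFiniteMeasure (volume.restrict (Ioc a b)) := by
  constructor
  rw [Measure.restrict_apply_univ, Real.volume_Ioc]
  exact ENNReal.ofReal_lt_top

/-- Parseval pairing on a circle of circumference `T`, base point `a`. -/
theorem circle_parseval {T : ℝ} (hT : 0 < T) (a : ℝ) {u v : ℝ → ℂ}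
    (hum : Measurable u) (hvm : Measurable v)
    (hu : MemLp u 2 (volume.restrict (Ioc a (a + T))))
    (hv : MemLp v 2 (volume.restrict (Ioc a (a + T)))) :
    Summable (fun z : ℤ =>
        (∫ x in Ioc a (a + T), u x * enegC ((z : ℝ) / T) x) *
          (starRingEnd ℂ) (∫ x in Ioc a (a + T), v x * enegC ((z : ℝ) / T) x)) ∧
      ∑' z : ℤ,
          (∫ x in Ioc a (a + T), u x * enegC ((z : ℝ) / T) x) *
            (starRingEnd ℂ) (∫ x in Ioc a (a + T), v x * enegC ((z : ℝ) / T) x) =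
        (T : ℂ) * ∫ x in Ioc a (a + T), u x * (starRingEnd ℂ) (v x) := by
  haveI : Fact (0 < T) := ⟨hT⟩
  have hTne : (T : ℂ) ≠ 0 := by exact_mod_cast hT.ne'
  -- build the Lp element for a function
  have build : ∀ (w : ℝ → ℂ), Measurable w → MemLp w 2 (volume.restrict (Ioc a (a + T))) →
      ∃ W : Lp ℂ 2 (@AddCircle.haarAddCircle T _),
        (⇑W =ᵐ[@AddCircle.haarAddCircle T _] AddCircle.liftIoc T a w) ∧
        ∀ n : ℤ, fourierBasis.repr W n =
          (1 / T : ℂ) * ∫ x in Ioc a (a + T), w x * enegC ((n : ℝ) / T) x := by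
    intro w hwm hw
    set Wf := AddCircle.liftIoc T a w with hWf
    have hWfm : Measurable Wf := by
      have h1 : Measurable fun q : AddCircle T =>
          ((AddCircle.measurableEquivIoc T a q : Ioc a (a + T)) : ℝ) :=
        measurable_subtype_coe.comp (AddCircle.measurableEquivIoc T a).measurable
      exact hwm.comp h1
    have hWcoe : ∀ x ∈ Ioc a (a + T), Wf ↑x = w x := fun x hx =>
      AddCircle.liftIoc_coe_apply hx
    have hmemvol : MemLp Wf 2 (volume : Measure (AddCircle T)) := by
      rw [← (AddCircle.measurePreserving_mk T a).map_eq]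
      refine (memLp_map_measure_iff hWfm.aestronglyMeasurable
        AddCircle.measurable_mk'.aemeasurable).mpr ?_
      exact (memLp_congr_ae
        (((ae_restrict_mem measurableSet_Ioc).mono fun x hx => hWcoe x hx))).mpr hw
    have hhaar : (@AddCircle.haarAddCircle T _) =
        (ENNReal.ofReal T)⁻¹ • (volume : Measure (AddCircle T)) := by
      rw [AddCircle.volume_eq_smul_haarAddCircle, smul_smul, ENNReal.inv_mul_cancel, one_smul]
      · exact (ENNReal.ofReal_pos.mpr hT).ne'
      · exact ENNReal.ofReal_ne_top
    have hmem : MemLp Wf 2 (@AddCircle.haarAddCircle T _) := by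
      rw [hhaar]
      exact hmemvol.smul_measure (by simp [hT])
    refine ⟨hmem.toLp Wf, hmem.coeFn_toLp, ?_⟩
    intro n
    rw [fourierBasis_repr]
    have h1 : fourierCoeff (⇑(hmem.toLp Wf)) n = fourierCoeff Wf n := by
      unfold fourierCoeff
      apply integral_congr_ae
      filter_upwards [hmem.coeFn_toLp] with t ht
      rw [ht]
    rw [h1, hWf, fourierCoeff_liftIoc_eq, fourierCoeffOn_eq_integral,
      intervalIntegral.integral_of_le (by linarith : a ≤ a + T), add_sub_cancel_left]
    rw [show (∫ x in Ioc a (a + T), (fourier (-n) (x : AddCircle T)) • w x) =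
        ∫ x in Ioc a (a + T), w x * enegC ((n : ℝ) / T) x from
      setIntegral_congr_fun measurableSet_Ioc
        (fun x _ => by rw [smul_eq_mul, fourier_neg_eq, mul_comm])]
    rw [Complex.real_smul]
    push_cast
    ring
  obtain ⟨WU, hWUae, hWUrepr⟩ := build u hum hu
  obtain ⟨WV, hWVae, hWVrepr⟩ := build v hvm hv
  have hcu : ∀ n : ℤ, (∫ x in Ioc a (a + T), u x * enegC ((n : ℝ) / T) x) =
      (T : ℂ) * fourierBasis.repr WU n := by
    intro n
    rw [hWUrepr, ← mul_assoc]
    field_simp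
  have hcv : ∀ n : ℤ, (∫ x in Ioc a (a + T), v x * enegC ((n : ℝ) / T) x) =
      (T : ℂ) * fourierBasis.repr WV n := by
    intro n
    rw [hWVrepr, ← mul_assoc]
    field_simp
  have hsum0 : Summable (fun n : ℤ =>
      (inner ℂ ((fourierBasis (T := T)).repr WV n) ((fourierBasis (T := T)).repr WU n) : ℂ)) :=
    lp.summable_inner _ _
  have hterm : ∀ n : ℤ,
      (∫ x in Ioc a (a + T), u x * enegC ((n : ℝ) / T) x) *
        (starRingEnd ℂ) (∫ x in Ioc a (a + T), v x * enegC ((n : ℝ) / T) x) =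
      (T : ℂ) ^ 2 * (inner ℂ ((fourierBasis (T := T)).repr WV n)
          ((fourierBasis (T := T)).repr WU n) : ℂ) := by
    intro n
    rw [RCLike.inner_apply, hcu, hcv, map_mul, Complex.conj_ofReal]
    ring
  constructor
  · exact ((hsum0.mul_left ((T : ℂ) ^ 2)).congr fun n => (hterm n).symm)
  · have hinner_sum : ∑' n : ℤ, (inner ℂ ((fourierBasis (T := T)).repr WV n)
        ((fourierBasis (T := T)).repr WU n) : ℂ) = (inner ℂ WV WU : ℂ) := by
      rw [show (inner ℂ WV WU : ℂ) = ∑' n : ℤ,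
          (inner ℂ WV ((fourierBasis (T := T)) n) : ℂ) *
            (inner ℂ ((fourierBasis (T := T)) n) WU : ℂ) from
        (fourierBasis.tsum_inner_mul_inner WV WU).symm]
      apply tsum_congr
      intro n
      rw [RCLike.inner_apply, fourierBasis.repr_apply_apply, fourierBasis.repr_apply_apply,
        inner_conj_symm, mul_comm]
    have hinner_val : (inner ℂ WV WU : ℂ) =
        (1 / T : ℂ) * ∫ x in Ioc a (a + T), u x * (starRingEnd ℂ) (v x) := by
      rw [MeasureTheory.L2.inner_def]
      have h2 : ∫ t, (inner ℂ (WV t) (WU t) : ℂ) ∂(@AddCircle.haarAddCircle T _) =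
          ∫ t, (starRingEnd ℂ) (AddCircle.liftIoc T a v t) * (AddCircle.liftIoc T a u t)
            ∂(@AddCircle.haarAddCircle T _) := by
        apply integral_congr_ae
        filter_upwards [hWUae, hWVae] with t htu htv
        rw [RCLike.inner_apply, htu, htv, mul_comm]
      rw [h2]
      have hhaar : (@AddCircle.haarAddCircle T _) =
          (ENNReal.ofReal T)⁻¹ • (volume : Measure (AddCircle T)) := by
        rw [AddCircle.volume_eq_smul_haarAddCircle, smul_smul, ENNReal.inv_mul_cancel, one_smul]
        · exact (ENNReal.ofReal_pos.mpr hT).ne'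
        · exact ENNReal.ofReal_ne_top
      rw [hhaar, integral_smul_measure]
      rw [show (∫ t, (starRingEnd ℂ) (AddCircle.liftIoc T a v t) * (AddCircle.liftIoc T a u t)
            ∂(volume : Measure (AddCircle T))) =
          ∫ x in Ioc a (a + T), (starRingEnd ℂ) (v x) * u x from ?_]
      · rw [ENNReal.toReal_inv, ENNReal.toReal_ofReal hT.le]
        rw [show (∫ x in Ioc a (a + T), (starRingEnd ℂ) (v x) * u x) =
            ∫ x in Ioc a (a + T), u x * (starRingEnd ℂ) (v x) from
          integral_congr_ae (Filter.Eventually.of_forall fun x => mul_comm _ _)]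
        rw [Complex.real_smul]
        push_cast
        ring
      · rw [← AddCircle.integral_preimage T a
          (fun t => (starRingEnd ℂ) (AddCircle.liftIoc T a v t) * (AddCircle.liftIoc T a u t))]
        apply setIntegral_congr_fun measurableSet_Ioc
        intro x hx
        show (starRingEnd ℂ) (AddCircle.liftIoc T a v ((x : ℝ) : AddCircle T)) *
            AddCircle.liftIoc T a u ((x : ℝ) : AddCircle T) = _
        rw [AddCircle.liftIoc_coe_apply hx, AddCircle.liftIoc_coe_apply hx]
    calc ∑' n : ℤ, (∫ x in Ioc a (a + T), u x * enegC ((n : ℝ) / T) x) *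
          (starRingEnd ℂ) (∫ x in Ioc a (a + T), v x * enegC ((n : ℝ) / T) x)
        = ∑' n : ℤ, (T : ℂ) ^ 2 * (inner ℂ ((fourierBasis (T := T)).repr WV n)
            ((fourierBasis (T := T)).repr WU n) : ℂ) := tsum_congr hterm
      _ = (T : ℂ) ^ 2 * ∑' n : ℤ, (inner ℂ ((fourierBasis (T := T)).repr WV n)
            ((fourierBasis (T := T)).repr WU n) : ℂ) := tsum_mul_left
      _ = (T : ℂ) ^ 2 * ((1 / T : ℂ) * ∫ x in Ioc a (a + T), u x * (starRingEnd ℂ) (v x)) := by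
            rw [hinner_sum, hinner_val]
      _ = (T : ℂ) * ∫ x in Ioc a (a + T), u x * (starRingEnd ℂ) (v x) := by
            field_simp

end BPaux


noncomputable section BPaux2
open Set

lemma mem_lambda_two (N r : ℕ) (z : ℤ) : (2 * (z : ℝ)) ∈ LambdaSet N r :=
  ⟨z, Or.inl rfl⟩

lemma mem_lambda_rN (N r : ℕ) (z : ℤ) :
    ((r : ℝ) / (N : ℝ) + 2 * (z : ℝ)) ∈ LambdaSet N r :=
  ⟨z, Or.inr rfl⟩

lemma mem_lambda_twoN (N r : ℕ) (hN : 1 ≤ N) (lam : LambdaSet N r) :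
    (2 * (N : ℝ) * ((lam : ℝ))) ∈ LambdaSet N r := by
  have hNne : ((N : ℝ)) ≠ 0 := Nat.cast_ne_zero.mpr (by omega)
  obtain ⟨x, hx⟩ := lam
  obtain ⟨z, hz | hz⟩ := hx
  · refine ⟨2 * (N : ℤ) * z, Or.inl ?_⟩
    simp only [hz]
    push_cast
    ring
  · refine ⟨(r : ℤ) + 2 * (N : ℤ) * z, Or.inl ?_⟩
    simp only [hz]
    push_cast
    field_simp

lemma mem_lambda_sub (N r : ℕ) (hN : 1 ≤ N) (lam lam' : LambdaSet N r) :
    ((lam' : ℝ) - 2 * (N : ℝ) * ((lam : ℝ))) ∈ LambdaSet N r := by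
  have hNne : ((N : ℝ)) ≠ 0 := Nat.cast_ne_zero.mpr (by omega)
  obtain ⟨x', hx'⟩ := lam'
  obtain ⟨x, hx⟩ := lam
  obtain ⟨z', hz'⟩ := hx'
  obtain ⟨z, hz⟩ := hx
  rcases hz' with h1 | h1 <;> rcases hz with h2 | h2
  · refine ⟨z' - 2 * (N : ℤ) * z, Or.inl ?_⟩
    simp only [h1, h2]
    push_cast
    ring
  · refine ⟨z' - (r : ℤ) - 2 * (N : ℤ) * z, Or.inl ?_⟩
    simp only [h1, h2]
    push_cast
    field_simp
    ring
  · refine ⟨z' - 2 * (N : ℤ) * z, Or.inr ?_⟩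
    simp only [h1, h2]
    push_cast
    ring
  · refine ⟨z' - (r : ℤ) - 2 * (N : ℤ) * z, Or.inr ?_⟩
    simp only [h1, h2]
    push_cast
    field_simp
    ring

/-- `Ω` with half-open-on-the-left intervals. -/
def OmegaI (N : ℕ) : Set ℝ := Ioc (0 : ℝ) (1 / 2) ∪ Ioc ((N : ℝ) / 2) ((N : ℝ) / 2 + 1 / 2)

lemma omegaI_measurable (N : ℕ) : MeasurableSet (OmegaI N) :=
  measurableSet_Ioc.union measurableSet_Ioc

lemma restrict_omega_eq (N : ℕ) :
    volume.restrict (OmegaSet N) = volume.restrict (OmegaI N) := by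
  apply Measure.restrict_congr_set
  unfold OmegaSet OmegaI
  rw [show ((N : ℝ) + 1) / 2 = (N : ℝ) / 2 + 1 / 2 by ring]
  exact ae_eq_set_union Ico_ae_eq_Ioc Ico_ae_eq_Ioc

lemma omegaI_disjoint (N : ℕ) (hN : 1 ≤ N) :
    Disjoint (Ioc (0 : ℝ) (1 / 2)) (Ioc ((N : ℝ) / 2) ((N : ℝ) / 2 + 1 / 2)) := by
  rw [Set.Ioc_disjoint_Ioc]
  have h1 : (1 : ℝ) ≤ (N : ℝ) := by exact_mod_cast hN
  exact (min_le_left _ _).trans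
    ((by linarith : (1 : ℝ) / 2 ≤ (N : ℝ) / 2).trans (le_max_right _ _))

lemma isFiniteMeasure_omegaI (N : ℕ) : IsFiniteMeasure (volume.restrict (OmegaI N)) := by
  constructor
  rw [Measure.restrict_apply_univ]
  refine lt_of_le_of_lt (measure_union_le _ _) ?_
  rw [Real.volume_Ioc, Real.volume_Ioc]
  exact ENNReal.add_lt_top.mpr ⟨ENNReal.ofReal_lt_top, ENNReal.ofReal_lt_top⟩

lemma memℒp_comp_add {w : ℝ → ℂ} (hwm : Measurable w) {a b c a' b' : ℝ}
    (ha' : a' = a + c) (hb' : b' = b + c)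
    (hw : MemLp w 2 (volume.restrict (Ioc a' b'))) :
    MemLp (fun x => w (x + c)) 2 (volume.restrict (Ioc a b)) := by
  subst ha' hb'
  have h0 := (measurePreserving_add_right (volume : Measure ℝ) c).restrict_preimage
    (measurableSet_Ioc (a := a + c) (b := b + c))
  have hpre : (fun x : ℝ => x + c) ⁻¹' Ioc (a + c) (b + c) = Ioc a b := by
    rw [preimage_add_const_Ioc]
    simp
  rw [hpre] at h0
  rw [← h0.map_eq] at hw
  exact (memLp_map_measure_iff hwm.aestronglyMeasurable h0.measurable.aemeasurable).mp hw

lemma integrableOn_of_memℒp2 {w : ℝ → ℂ} {S : Set ℝ}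
    (hfin : IsFiniteMeasure (volume.restrict S))
    (hw : MemLp w 2 (volume.restrict S)) : IntegrableOn w S volume := by
  haveI := hfin
  exact memLp_one_iff_integrable.mp (hw.mono_exponent (by norm_num))

lemma enegC_int_half (N : ℕ) (z : ℤ) : enegC (2 * (z : ℝ)) ((N : ℝ) / 2) = 1 := by
  unfold enegC
  rw [show (((-(2 * π * (2 * (z : ℝ)) * ((N : ℝ) / 2)) : ℝ) : ℂ) * Complex.I) =
      ((-z * (N : ℤ) : ℤ) : ℂ) * (2 * (π : ℂ) * Complex.I) by push_cast; ring]
  exact Complex.exp_int_mul_two_pi_mul_I _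

lemma enegC_rN_half (N r : ℕ) (hN : 1 ≤ N) (hodd : Odd r) (z : ℤ) :
    enegC ((r : ℝ) / (N : ℝ) + 2 * (z : ℝ)) ((N : ℝ) / 2) = -1 := by
  have hNne : ((N : ℝ)) ≠ 0 := Nat.cast_ne_zero.mpr (by omega)
  have hNne' : ((N : ℂ)) ≠ 0 := by exact_mod_cast hNne
  obtain ⟨m, hm⟩ := hodd
  unfold enegC
  rw [show (((-(2 * π * ((r : ℝ) / (N : ℝ) + 2 * (z : ℝ)) * ((N : ℝ) / 2)) : ℝ) : ℂ) *
        Complex.I) =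
      ((-(m : ℤ) - z * (N : ℤ) : ℤ) : ℂ) * (2 * (π : ℂ) * Complex.I) +
        (-((π : ℂ) * Complex.I)) by push_cast [hm]; field_simp; ring]
  rw [Complex.exp_add, Complex.exp_int_mul_two_pi_mul_I, one_mul, Complex.exp_neg,
    Complex.exp_pi_mul_I]
  norm_num

theorem lambda_parseval (N r : ℕ) (hN : 1 ≤ N) (hodd : Odd r) {u v : ℝ → ℂ}
    (hum : Measurable u) (hvm : Measurable v)
    (hu : MemLp u 2 (volume.restrict (OmegaI N)))
    (hv : MemLp v 2 (volume.restrict (OmegaI N))) :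
    Summable (fun lam : LambdaSet N r =>
        (∫ x in OmegaI N, u x * enegC (lam : ℝ) x) *
          (starRingEnd ℂ) (∫ x in OmegaI N, v x * enegC (lam : ℝ) x)) ∧
      ∑' lam : LambdaSet N r,
          (∫ x in OmegaI N, u x * enegC (lam : ℝ) x) *
            (starRingEnd ℂ) (∫ x in OmegaI N, v x * enegC (lam : ℝ) x) =
        ∫ x in OmegaI N, u x * (starRingEnd ℂ) (v x) := by
  have hNne : ((N : ℝ)) ≠ 0 := Nat.cast_ne_zero.mpr (by omega)
  have h1N : (1 : ℝ) ≤ (N : ℝ) := by exact_mod_cast hN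
  set c : ℝ := (N : ℝ) / 2 with hcdef
  have hc0 : 0 ≤ c := by positivity
  haveI hfin : IsFiniteMeasure (volume.restrict (OmegaI N)) := isFiniteMeasure_omegaI N
  have hsub0 : volume.restrict (Ioc (0 : ℝ) (1 / 2)) ≤ volume.restrict (OmegaI N) :=
    Measure.restrict_mono subset_union_left le_rfl
  have hsub1 : volume.restrict (Ioc c (c + 1 / 2)) ≤ volume.restrict (OmegaI N) :=
    Measure.restrict_mono subset_union_right le_rfl
  have htransm : ∀ {w : ℝ → ℂ}, Measurable w → Measurable (fun x => w (x + c)) :=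
    fun hwm => hwm.comp (measurable_add_const c)
  have htrans : ∀ {w : ℝ → ℂ}, Measurable w → MemLp w 2 (volume.restrict (OmegaI N)) →
      MemLp (fun x => w (x + c)) 2 (volume.restrict (Ioc (0 : ℝ) (1 / 2))) := by
    intro w hwm hw
    exact memℒp_comp_add hwm (by ring) (by ring) (hw.mono_measure hsub1)
  -- splitting of the integral over Ω
  have split : ∀ (w : ℝ → ℂ), Measurable w → MemLp w 2 (volume.restrict (OmegaI N)) →
      ∀ t : ℝ, (∫ x in OmegaI N, w x * enegC t x) =
        (∫ x in Ioc (0 : ℝ) (1 / 2), w x * enegC t x) +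
          (∫ x in Ioc (0 : ℝ) (1 / 2), w (x + c) * enegC t x) * enegC t c := by
    intro w hwm hw t
    have hi0 : IntegrableOn (fun x => w x * enegC t x) (Ioc (0 : ℝ) (1 / 2)) volume :=
      integrableOn_of_memℒp2 (BP_isFiniteMeasure_Ioc _ _)
        (memℒp_mul_enegC hwm (hw.mono_measure hsub0) t)
    have hi1 : IntegrableOn (fun x => w x * enegC t x) (Ioc c (c + 1 / 2)) volume :=
      integrableOn_of_memℒp2 (BP_isFiniteMeasure_Ioc _ _)
        (memℒp_mul_enegC hwm (hw.mono_measure hsub1) t)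
    have hunion : (∫ x in OmegaI N, w x * enegC t x) =
        (∫ x in Ioc (0 : ℝ) (1 / 2), w x * enegC t x) +
          ∫ x in Ioc c (c + 1 / 2), w x * enegC t x :=
      setIntegral_union (omegaI_disjoint N hN) measurableSet_Ioc hi0 hi1
    rw [hunion]
    congr 1
    calc (∫ x in Ioc c (c + 1 / 2), w x * enegC t x)
        = ∫ x in (0 + c)..(1 / 2 + c), w x * enegC t x := by
          rw [intervalIntegral.integral_of_le (by linarith : (0 : ℝ) + c ≤ 1 / 2 + c)]
          rw [show Ioc ((0 : ℝ) + c) (1 / 2 + c) = Ioc c (c + 1 / 2) by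
            rw [zero_add, add_comm (1 / 2 : ℝ) c]]
      _ = ∫ x in (0 : ℝ)..(1 / 2), (fun y => w y * enegC t y) (x + c) :=
          (intervalIntegral.integral_comp_add_right (fun y => w y * enegC t y) c).symm
      _ = ∫ x in Ioc (0 : ℝ) (1 / 2), w (x + c) * enegC t (x + c) := by
          rw [intervalIntegral.integral_of_le (by norm_num : (0 : ℝ) ≤ 1 / 2)]
      _ = (∫ x in Ioc (0 : ℝ) (1 / 2), w (x + c) * enegC t x) * enegC t c := by
          rw [← integral_mul_const]
          apply setIntegral_congr_fun measurableSet_Ioc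
          intro x _
          dsimp only
          rw [enegC_arg_add]
          ring
  have hfreq : ∀ z : ℤ, (z : ℝ) / (1 / 2) = 2 * (z : ℝ) := fun z => by
    rw [div_eq_iff (by norm_num : (1 / 2 : ℝ) ≠ 0)]
    ring
  -- coefficient identities
  have hco1 : ∀ (w : ℝ → ℂ), Measurable w → MemLp w 2 (volume.restrict (OmegaI N)) →
      ∀ z : ℤ, (∫ x in OmegaI N, w x * enegC (2 * (z : ℝ)) x) =
        ∫ x in Ioc (0 : ℝ) (1 / 2), (w x + w (x + c)) * enegC ((z : ℝ) / (1 / 2)) x := by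
    intro w hwm hw z
    have hIa : IntegrableOn (fun x => w x * enegC (2 * (z : ℝ)) x) (Ioc (0 : ℝ) (1 / 2)) volume :=
      integrableOn_of_memℒp2 (BP_isFiniteMeasure_Ioc _ _)
        (memℒp_mul_enegC hwm (hw.mono_measure hsub0) _)
    have hIb : IntegrableOn (fun x => w (x + c) * enegC (2 * (z : ℝ)) x)
        (Ioc (0 : ℝ) (1 / 2)) volume :=
      integrableOn_of_memℒp2 (BP_isFiniteMeasure_Ioc _ _)
        (memℒp_mul_enegC (htransm hwm) (htrans hwm hw) _)
    rw [hfreq z, split w hwm hw _, show enegC (2 * (z : ℝ)) c = 1 from enegC_int_half N z,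
      mul_one, ← integral_add hIa hIb]
    exact setIntegral_congr_fun measurableSet_Ioc fun x _ => (add_mul _ _ _).symm
  have hco2 : ∀ (w : ℝ → ℂ), Measurable w → MemLp w 2 (volume.restrict (OmegaI N)) →
      ∀ z : ℤ, (∫ x in OmegaI N, w x * enegC ((r : ℝ) / (N : ℝ) + 2 * (z : ℝ)) x) =
        ∫ x in Ioc (0 : ℝ) (1 / 2),
          ((w x - w (x + c)) * enegC ((r : ℝ) / (N : ℝ)) x) * enegC ((z : ℝ) / (1 / 2)) x := by
    intro w hwm hw z
    have hIa : IntegrableOn (fun x => w x * enegC ((r : ℝ) / (N : ℝ) + 2 * (z : ℝ)) x)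
        (Ioc (0 : ℝ) (1 / 2)) volume :=
      integrableOn_of_memℒp2 (BP_isFiniteMeasure_Ioc _ _)
        (memℒp_mul_enegC hwm (hw.mono_measure hsub0) _)
    have hIb : IntegrableOn (fun x => w (x + c) * enegC ((r : ℝ) / (N : ℝ) + 2 * (z : ℝ)) x)
        (Ioc (0 : ℝ) (1 / 2)) volume :=
      integrableOn_of_memℒp2 (BP_isFiniteMeasure_Ioc _ _)
        (memℒp_mul_enegC (htransm hwm) (htrans hwm hw) _)
    rw [hfreq z, split w hwm hw _,
      show enegC ((r : ℝ) / (N : ℝ) + 2 * (z : ℝ)) c = -1 from enegC_rN_half N r hN hodd z,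
      mul_neg_one, ← sub_eq_add_neg, ← integral_sub hIa hIb]
    apply setIntegral_congr_fun measurableSet_Ioc
    intro x _
    dsimp only
    rw [enegC_freq_add]
    ring
  -- the four functions fed to the circle
  set U1 : ℝ → ℂ := fun x => u x + u (x + c) with hU1def
  set V1 : ℝ → ℂ := fun x => v x + v (x + c) with hV1def
  set U2 : ℝ → ℂ := fun x => (u x - u (x + c)) * enegC ((r : ℝ) / (N : ℝ)) x with hU2def
  set V2 : ℝ → ℂ := fun x => (v x - v (x + c)) * enegC ((r : ℝ) / (N : ℝ)) x with hV2def
  have hU1m : Measurable U1 := hum.add (htransm hum)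
  have hV1m : Measurable V1 := hvm.add (htransm hvm)
  have hU2m : Measurable U2 := (hum.sub (htransm hum)).mul (enegC_measurable _)
  have hV2m : Measurable V2 := (hvm.sub (htransm hvm)).mul (enegC_measurable _)
  have hU1mem : MemLp U1 2 (volume.restrict (Ioc (0 : ℝ) (1 / 2))) :=
    (hu.mono_measure hsub0).add (htrans hum hu)
  have hV1mem : MemLp V1 2 (volume.restrict (Ioc (0 : ℝ) (1 / 2))) :=
    (hv.mono_measure hsub0).add (htrans hvm hv)
  have hU2mem : MemLp U2 2 (volume.restrict (Ioc (0 : ℝ) (1 / 2))) :=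
    memℒp_mul_enegC (hum.sub (htransm hum)) ((hu.mono_measure hsub0).sub (htrans hum hu)) _
  have hV2mem : MemLp V2 2 (volume.restrict (Ioc (0 : ℝ) (1 / 2))) :=
    memℒp_mul_enegC (hvm.sub (htransm hvm)) ((hv.mono_measure hsub0).sub (htrans hvm hv)) _
  have e0 : (0 : ℝ) + 1 / 2 = 1 / 2 := by norm_num
  have H1 := circle_parseval (T := 1 / 2) (by norm_num) 0 hU1m hV1m
    (by rw [e0]; exact hU1mem) (by rw [e0]; exact hV1mem)
  rw [e0] at H1
  have H2 := circle_parseval (T := 1 / 2) (by norm_num) 0 hU2m hV2m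
    (by rw [e0]; exact hU2mem) (by rw [e0]; exact hV2mem)
  rw [e0] at H2
  -- set-up of the two index families
  set S : Set (LambdaSet N r) := {lam | ∃ z : ℤ, (lam : ℝ) = 2 * (z : ℝ)} with hSdef
  set f₁ : ℤ → ↥S := fun z => ⟨⟨2 * (z : ℝ), mem_lambda_two N r z⟩, ⟨z, rfl⟩⟩ with hf₁def
  have hbij1 : Function.Bijective f₁ := by
    constructor
    · intro z z' h
      have h2 : (2 * (z : ℝ)) = 2 * (z' : ℝ) :=
        congrArg (fun s : ↥S => ((s : LambdaSet N r) : ℝ)) h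
      have : (z : ℝ) = (z' : ℝ) := by linarith
      exact_mod_cast this
    · rintro ⟨⟨x, hxmem⟩, hxS⟩
      obtain ⟨z, hz⟩ := hxS
      exact ⟨z, Subtype.ext (Subtype.ext hz.symm)⟩
  set e₁ : ℤ ≃ ↥S := Equiv.ofBijective f₁ hbij1 with he₁def
  have hnotS : ∀ z : ℤ,
      (⟨(r : ℝ) / (N : ℝ) + 2 * (z : ℝ), mem_lambda_rN N r z⟩ : LambdaSet N r) ∈ Sᶜ := by
    intro z
    rintro ⟨z', hz'⟩
    have hz'' : (r : ℝ) / (N : ℝ) + 2 * (z : ℝ) = 2 * (z' : ℝ) := hz'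
    have hr : (r : ℝ) = 2 * (z' : ℝ) * (N : ℝ) - 2 * (z : ℝ) * (N : ℝ) := by
      field_simp at hz''
      linarith
    have hrz : (r : ℤ) = 2 * z' * (N : ℤ) - 2 * z * (N : ℤ) := by exact_mod_cast hr
    have heven : Even (r : ℤ) := ⟨z' * (N : ℤ) - z * (N : ℤ), by rw [hrz]; ring⟩
    exact (Int.not_odd_iff_even.mpr heven) ((Int.odd_coe_nat r).mpr hodd)
  set f₂ : ℤ → ↥(Sᶜ) := fun z =>
    ⟨⟨(r : ℝ) / (N : ℝ) + 2 * (z : ℝ), mem_lambda_rN N r z⟩, hnotS z⟩ with hf₂def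
  have hbij2 : Function.Bijective f₂ := by
    constructor
    · intro z z' h
      have h2 : (r : ℝ) / (N : ℝ) + 2 * (z : ℝ) = (r : ℝ) / (N : ℝ) + 2 * (z' : ℝ) :=
        congrArg (fun s : ↥(Sᶜ) => ((s : LambdaSet N r) : ℝ)) h
      have : (z : ℝ) = (z' : ℝ) := by linarith
      exact_mod_cast this
    · rintro ⟨⟨x, hxmem⟩, hxc⟩
      obtain ⟨z, hz | hz⟩ := hxmem
      · exact absurd ⟨z, hz⟩ hxc
      · exact ⟨z, Subtype.ext (Subtype.ext hz.symm)⟩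
  set e₂ : ℤ ≃ ↥(Sᶜ) := Equiv.ofBijective f₂ hbij2 with he₂def
  set g : LambdaSet N r → ℂ := fun lam =>
    (∫ x in OmegaI N, u x * enegC (lam : ℝ) x) *
      (starRingEnd ℂ) (∫ x in OmegaI N, v x * enegC (lam : ℝ) x) with hgdef
  have hg1 : ∀ z : ℤ, g ((e₁ z : ↥S) : LambdaSet N r) =
      (∫ x in Ioc (0 : ℝ) (1 / 2), U1 x * enegC ((z : ℝ) / (1 / 2)) x) *
        (starRingEnd ℂ) (∫ x in Ioc (0 : ℝ) (1 / 2), V1 x * enegC ((z : ℝ) / (1 / 2)) x) := by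
    intro z
    show (∫ x in OmegaI N, u x * enegC (2 * (z : ℝ)) x) *
        (starRingEnd ℂ) (∫ x in OmegaI N, v x * enegC (2 * (z : ℝ)) x) = _
    rw [hco1 u hum hu z, hco1 v hvm hv z]
  have hg2 : ∀ z : ℤ, g ((e₂ z : ↥(Sᶜ)) : LambdaSet N r) =
      (∫ x in Ioc (0 : ℝ) (1 / 2), U2 x * enegC ((z : ℝ) / (1 / 2)) x) *
        (starRingEnd ℂ) (∫ x in Ioc (0 : ℝ) (1 / 2), V2 x * enegC ((z : ℝ) / (1 / 2)) x) := by
    intro z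
    show (∫ x in OmegaI N, u x * enegC ((r : ℝ) / (N : ℝ) + 2 * (z : ℝ)) x) *
        (starRingEnd ℂ) (∫ x in OmegaI N,
          v x * enegC ((r : ℝ) / (N : ℝ) + 2 * (z : ℝ)) x) = _
    rw [hco2 u hum hu z, hco2 v hvm hv z]
  have hS1 : Summable (fun s : ↥S => g ↑s) :=
    e₁.summable_iff.mp ((H1.1).congr fun z => (hg1 z).symm)
  have hS2 : Summable (fun s : ↥(Sᶜ) => g ↑s) :=
    e₂.summable_iff.mp ((H2.1).congr fun z => (hg2 z).symm)
  have hgsum : Summable g := summable_subtype_and_compl.mp ⟨hS1, hS2⟩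
  refine ⟨hgsum, ?_⟩
  -- integrabilities for the final algebra
  have huv0 : IntegrableOn (fun x => u x * (starRingEnd ℂ) (v x)) (Ioc (0 : ℝ) (1 / 2)) volume :=
    integrable_mul_L2 (hu.mono_measure hsub0) (memℒp_conj hvm (hv.mono_measure hsub0))
  have huv1 : IntegrableOn (fun x => u x * (starRingEnd ℂ) (v x)) (Ioc c (c + 1 / 2)) volume :=
    integrable_mul_L2 (hu.mono_measure hsub1) (memℒp_conj hvm (hv.mono_measure hsub1))
  have hU1V1 : IntegrableOn (fun x => U1 x * (starRingEnd ℂ) (V1 x))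
      (Ioc (0 : ℝ) (1 / 2)) volume :=
    integrable_mul_L2 hU1mem (memℒp_conj hV1m hV1mem)
  have hU2V2 : IntegrableOn (fun x => U2 x * (starRingEnd ℂ) (V2 x))
      (Ioc (0 : ℝ) (1 / 2)) volume :=
    integrable_mul_L2 hU2mem (memℒp_conj hV2m hV2mem)
  have huv2 : IntegrableOn (fun x => u (x + c) * (starRingEnd ℂ) (v (x + c)))
      (Ioc (0 : ℝ) (1 / 2)) volume :=
    integrable_mul_L2 (htrans hum hu) (memℒp_conj (htransm hvm) (htrans hvm hv))
  calc ∑' lam : LambdaSet N r, g lam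
      = (∑' s : ↥S, g ↑s) + ∑' s : ↥(Sᶜ), g ↑s :=
        (hgsum.tsum_subtype_add_tsum_subtype_compl S).symm
    _ = (∑' z : ℤ, g ((e₁ z : ↥S) : LambdaSet N r)) +
          ∑' z : ℤ, g ((e₂ z : ↥(Sᶜ)) : LambdaSet N r) := by
        rw [e₁.tsum_eq (fun s : ↥S => g ↑s), e₂.tsum_eq (fun s : ↥(Sᶜ) => g ↑s)]
    _ = ((1 / 2 : ℝ) : ℂ) * (∫ x in Ioc (0 : ℝ) (1 / 2), U1 x * (starRingEnd ℂ) (V1 x)) +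
          ((1 / 2 : ℝ) : ℂ) * ∫ x in Ioc (0 : ℝ) (1 / 2), U2 x * (starRingEnd ℂ) (V2 x) := by
        rw [tsum_congr hg1, tsum_congr hg2, H1.2, H2.2]
    _ = ((1 / 2 : ℝ) : ℂ) *
          ∫ x in Ioc (0 : ℝ) (1 / 2),
            (U1 x * (starRingEnd ℂ) (V1 x) + U2 x * (starRingEnd ℂ) (V2 x)) := by
        rw [integral_add hU1V1 hU2V2, mul_add]
    _ = ((1 / 2 : ℝ) : ℂ) *
          ∫ x in Ioc (0 : ℝ) (1 / 2),
            (2 * (u x * (starRingEnd ℂ) (v x)) +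
              2 * (u (x + c) * (starRingEnd ℂ) (v (x + c)))) := by
        congr 1
        apply setIntegral_congr_fun measurableSet_Ioc
        intro x _
        simp only [hU1def, hV1def, hU2def, hV2def, map_mul, map_add, map_sub]
        calc (u x + u (x + c)) * ((starRingEnd ℂ) (v x) + (starRingEnd ℂ) (v (x + c))) +
              (u x - u (x + c)) * enegC ((r : ℝ) / (N : ℝ)) x *
                (((starRingEnd ℂ) (v x) - (starRingEnd ℂ) (v (x + c))) *
                  (starRingEnd ℂ) (enegC ((r : ℝ) / (N : ℝ)) x))
            = (u x + u (x + c)) * ((starRingEnd ℂ) (v x) + (starRingEnd ℂ) (v (x + c))) +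
              (u x - u (x + c)) * ((starRingEnd ℂ) (v x) - (starRingEnd ℂ) (v (x + c))) *
                (enegC ((r : ℝ) / (N : ℝ)) x * (starRingEnd ℂ) (enegC ((r : ℝ) / (N : ℝ)) x)) := by
              ring
          _ = _ := by rw [enegC_mul_conj_self]; ring
    _ = (∫ x in Ioc (0 : ℝ) (1 / 2), u x * (starRingEnd ℂ) (v x)) +
          ∫ x in Ioc (0 : ℝ) (1 / 2), u (x + c) * (starRingEnd ℂ) (v (x + c)) := by
        rw [integral_add (huv0.const_mul 2) (huv2.const_mul 2), integral_const_mul,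
          integral_const_mul]
        push_cast
        ring
    _ = (∫ x in Ioc (0 : ℝ) (1 / 2), u x * (starRingEnd ℂ) (v x)) +
          ∫ x in Ioc c (c + 1 / 2), u x * (starRingEnd ℂ) (v x) := by
        congr 1
        calc (∫ x in Ioc (0 : ℝ) (1 / 2), u (x + c) * (starRingEnd ℂ) (v (x + c)))
            = ∫ x in (0 : ℝ)..(1 / 2), (fun y => u y * (starRingEnd ℂ) (v y)) (x + c) := by
              rw [intervalIntegral.integral_of_le (by norm_num : (0 : ℝ) ≤ 1 / 2)]
          _ = ∫ x in (0 + c)..(1 / 2 + c), u x * (starRingEnd ℂ) (v x) :=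
              intervalIntegral.integral_comp_add_right (fun y => u y * (starRingEnd ℂ) (v y)) c
          _ = ∫ x in Ioc ((0 : ℝ) + c) (1 / 2 + c), u x * (starRingEnd ℂ) (v x) := by
              rw [intervalIntegral.integral_of_le (by linarith : (0 : ℝ) + c ≤ 1 / 2 + c)]
          _ = ∫ x in Ioc c (c + 1 / 2), u x * (starRingEnd ℂ) (v x) := by
              rw [show Ioc ((0 : ℝ) + c) (1 / 2 + c) = Ioc c (c + 1 / 2) by
                rw [zero_add, add_comm (1 / 2 : ℝ) c]]
    _ = ∫ x in OmegaI N, u x * (starRingEnd ℂ) (v x) :=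
        (setIntegral_union (omegaI_disjoint N hN) measurableSet_Ioc huv0 huv1).symm

theorem lambda_parseval_sq (N r : ℕ) (hN : 1 ≤ N) (hodd : Odd r) {w : ℝ → ℂ}
    (hwm : Measurable w) (hw : MemLp w 2 (volume.restrict (OmegaI N))) :
    Summable (fun lam : LambdaSet N r => ‖∫ x in OmegaI N, w x * enegC (lam : ℝ) x‖ ^ 2) ∧
      ∑' lam : LambdaSet N r, ‖∫ x in OmegaI N, w x * enegC (lam : ℝ) x‖ ^ 2 =
        ∫ x in OmegaI N, ‖w x‖ ^ 2 := by
  obtain ⟨hs, he⟩ := lambda_parseval N r hN hodd hwm hwm hw hw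
  have hsum : Summable (fun lam : LambdaSet N r =>
      ‖∫ x in OmegaI N, w x * enegC (lam : ℝ) x‖ ^ 2) := by
    rw [← Complex.summable_ofReal]
    exact hs.congr fun lam => mul_conj_self_eq _
  refine ⟨hsum, ?_⟩
  apply Complex.ofReal_injective
  rw [Complex.ofReal_tsum]
  calc ∑' lam : LambdaSet N r, ((‖∫ x in OmegaI N, w x * enegC (lam : ℝ) x‖ ^ 2 : ℝ) : ℂ)
      = ∑' lam : LambdaSet N r,
          (∫ x in OmegaI N, w x * enegC (lam : ℝ) x) *
            (starRingEnd ℂ) (∫ x in OmegaI N, w x * enegC (lam : ℝ) x) :=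
        tsum_congr fun lam => (mul_conj_self_eq _).symm
    _ = ∫ x in OmegaI N, w x * (starRingEnd ℂ) (w x) := he
    _ = ∫ x in OmegaI N, ((‖w x‖ ^ 2 : ℝ) : ℂ) :=
        integral_congr_ae (Filter.Eventually.of_forall fun x => mul_conj_self_eq _)
    _ = ((∫ x in OmegaI N, ‖w x‖ ^ 2 : ℝ) : ℂ) := integral_ofReal (f := fun x => ‖w x‖ ^ 2)

end BPaux2


noncomputable section BPaux3
open Set

lemma tsum_double_sum {β M : Type*} [AddCommMonoid M] [TopologicalSpace M] [T2Space M]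
    [ContinuousAdd M] {n : ℕ} (f : Fin n → Fin n → β → M)
    (h : ∀ m k, Summable (f m k)) :
    ∑' b, ∑ m, ∑ k, f m k b = ∑ m, ∑ k, ∑' b, f m k b := by
  rw [Summable.tsum_finsetSum (fun m _ => (hasSum_sum (fun k _ => (h m k).hasSum)).summable)]
  exact Finset.sum_congr rfl fun m _ => Summable.tsum_finsetSum (fun k _ => h m k)

lemma Ioc_cover_exists {t0 : ℝ} (ht0 : 0 < t0) (a' : ℝ) :
    ∀ (nn : ℕ) (x : ℝ), x ∈ Ioc a' (a' + (nn : ℝ) * t0) →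
      ∃ i : ℕ, i < nn ∧ x ∈ Ioc (a' + (i : ℝ) * t0) (a' + (i : ℝ) * t0 + t0) ∧
        Ioc (a' + (i : ℝ) * t0) (a' + (i : ℝ) * t0 + t0) ⊆ Ioc a' (a' + (nn : ℝ) * t0) := by
  intro nn
  induction nn with
  | zero =>
    intro x hx
    exfalso
    simp only [Nat.cast_zero, zero_mul, add_zero, mem_Ioc] at hx
    linarith [hx.1, hx.2]
  | succ n ih =>
    intro x hx
    by_cases hxn : x ≤ a' + (n : ℝ) * t0
    · obtain ⟨i, hi, hmem, hsub⟩ := ih x ⟨hx.1, hxn⟩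
      refine ⟨i, Nat.lt_succ_of_lt hi, hmem, hsub.trans (Ioc_subset_Ioc le_rfl ?_)⟩
      push_cast
      nlinarith [ht0.le]
    · refine ⟨n, Nat.lt_succ_self n, ⟨lt_of_not_ge hxn, ?_⟩, Ioc_subset_Ioc ?_ ?_⟩
      · have h2 := hx.2
        push_cast at h2 ⊢
        linarith
      · nlinarith [ht0.le, (Nat.cast_nonneg n : (0 : ℝ) ≤ (n : ℝ))]
      · push_cast
        linarith

end BPaux3


set_option maxHeartbeats 2000000 in
open Set in
/-- if the non-uniform shift system is a matrix-valued discrete Bessel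
sequence with Bessel bound `b₀`, then a.e. on `Ω` one has
`∑_{m,k} |F(f_j)_{m,k}(x)|² ≤ 4 N b₀`, equivalently `‖F(f_j)(x)‖ ≤ 2 √(N b₀)`. -/
theorem fourier_sq_bound_of_bessel
    (N r n p : ℕ) (hN : 1 ≤ N) (hr_odd : Odd r) (hr_cop : Nat.Coprime r N)
    (hr1 : 1 ≤ r) (hr2 : r ≤ 2 * N - 1)
    (fs : Fin p → (LambdaSet N r → Mat n)) (hfs_mem : ∀ j, MemL2 N r (fs j))
    (b₀ : ℝ) (hb₀ : 0 < b₀)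
    (hbessel : ∀ f : LambdaSet N r → Mat n, MemL2 N r f →
      besselSum N r p fs f ≤ b₀ * l2normSq N r f) :
    ∀ (j : Fin p) (F : ℝ → Mat n), IsFT N r (fs j) F →
      ∀ᵐ x ∂(volume.restrict (OmegaSet N)),
        (∑ m, ∑ k, ‖F x m k‖ ^ 2) ≤ 4 * (N : ℝ) * b₀ ∧
        frobNorm (F x) ≤ 2 * Real.sqrt ((N : ℝ) * b₀) := by
  intro j F hF
  obtain ⟨hF2, hinv⟩ := hF
  have hNne : ((N : ℝ)) ≠ 0 := Nat.cast_ne_zero.mpr (by omega)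
  have hN0 : (0 : ℝ) < (N : ℝ) := Nat.cast_pos.mpr hN
  haveI hfinΩ : IsFiniteMeasure (volume.restrict (OmegaI N)) := isFiniteMeasure_omegaI N
  have hrest : volume.restrict (OmegaSet N) = volume.restrict (OmegaI N) := restrict_omega_eq N
  -- measurable representatives of the entries of F
  have hex : ∀ m k : Fin n, ∃ gmk : ℝ → ℂ, Measurable gmk ∧
      ((fun x => F x m k) =ᵐ[volume.restrict (OmegaI N)] gmk) ∧
      MemLp gmk 2 (volume.restrict (OmegaI N)) := by
    intro m k
    have h2 : MemLp (fun x => F x m k) 2 (volume.restrict (OmegaI N)) := by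
      rw [← hrest]; exact hF2 m k
    exact ⟨h2.1.mk _, h2.1.stronglyMeasurable_mk.measurable, h2.1.ae_eq_mk,
      (memLp_congr_ae h2.1.ae_eq_mk).mp h2⟩
  choose G hGm hGae hGmem using hex
  set Gsq : ℝ → ℝ := fun x => ∑ m, ∑ k, ‖G m k x‖ ^ 2 with hGsqdef
  have hGsqm : Measurable Gsq := by
    apply Finset.measurable_sum
    intro m _
    exact Finset.measurable_sum _ fun k _ => ((hGm m k).norm.pow_const 2)
  have hGsq0 : ∀ x, 0 ≤ Gsq x := fun x =>
    Finset.sum_nonneg fun m _ => Finset.sum_nonneg fun k _ => by positivity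
  have hsingle : ∀ (m k : Fin n) (x : ℝ), ‖G m k x‖ ^ 2 ≤ Gsq x := by
    intro m k x
    calc ‖G m k x‖ ^ 2 ≤ ∑ k', ‖G m k' x‖ ^ 2 :=
          Finset.single_le_sum (f := fun k' => ‖G m k' x‖ ^ 2)
            (fun k' _ => by positivity) (Finset.mem_univ k)
      _ ≤ Gsq x :=
          Finset.single_le_sum (f := fun m' => ∑ k', ‖G m' k' x‖ ^ 2)
            (fun m' _ => Finset.sum_nonneg fun k' _ => by positivity) (Finset.mem_univ m)
  have hinvG : ∀ (lam : LambdaSet N r) (m k : Fin n),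
      fs j lam m k = ∫ x in OmegaI N, G m k x * enegC (lam : ℝ) x := by
    intro lam m k
    rw [hinv lam m k]
    have h1 : (∫ x in OmegaSet N, F x m k *
        Complex.exp (((-(2 * π * (lam : ℝ) * x) : ℝ) : ℂ) * Complex.I)) =
        ∫ x in OmegaI N, F x m k * enegC (lam : ℝ) x := by
      rw [show (volume.restrict (OmegaSet N)) = volume.restrict (OmegaI N) from hrest]
      rfl
    rw [h1]
    refine integral_congr_ae ((hGae m k).mono fun x hx => ?_)
    dsimp only at hx ⊢
    rw [hx]
  set t0 : ℝ := 1 / (4 * (N : ℝ)) with ht0def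
  have ht0 : 0 < t0 := by rw [ht0def]; positivity
  -- ══ key vanishing lemma ══
  have key : ∀ aJ : ℝ, Ioc aJ (aJ + t0) ⊆ OmegaI N → ∀ M cc : ℝ, 4 * (N : ℝ) * b₀ < cc →
      volume {x | x ∈ Ioc aJ (aJ + t0) ∧ Gsq x ≤ M ∧ cc ≤ Gsq x} = 0 := by
    intro aJ hJsub M cc hcc
    set E : Set ℝ := {x | x ∈ Ioc aJ (aJ + t0) ∧ Gsq x ≤ M ∧ cc ≤ Gsq x} with hEdef
    have hEmeas : MeasurableSet E := by
      have hE2 : E = Ioc aJ (aJ + t0) ∩ (Gsq ⁻¹' Iic M ∩ Gsq ⁻¹' Ici cc) := by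
        ext x
        constructor
        · intro h; exact ⟨h.1, h.2.1, h.2.2⟩
        · intro h; exact ⟨h.1, h.2.1, h.2.2⟩
      rw [hE2]
      exact measurableSet_Ioc.inter ((hGsqm measurableSet_Iic).inter (hGsqm measurableSet_Ici))
    have hEJ : E ⊆ Ioc aJ (aJ + t0) := fun x hx => hx.1
    have hEΩ : E ⊆ OmegaI N := fun x hx => hJsub hx.1
    have hEfin' : volume E ≠ ⊤ := by
      refine ne_top_of_le_ne_top ?_ (measure_mono hEJ)
      rw [Real.volume_Ioc]
      exact ENNReal.ofReal_ne_top
    haveI hEfinM : IsFiniteMeasure (volume.restrict E) := by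
      constructor
      rw [Measure.restrict_apply_univ]
      exact hEfin'.lt_top
    have hIbdd : ∀ (f : ℝ → ℝ) (C : ℝ), Measurable f → (∀ x ∈ E, ‖f x‖ ≤ C) →
        IntegrableOn f E volume := by
      intro f C hfm hbd
      refine Integrable.mono' (integrable_const C) hfm.aestronglyMeasurable ?_
      filter_upwards [ae_restrict_mem hEmeas] with x hx
      exact hbd x hx
    have hIGsq : IntegrableOn Gsq E volume := by
      refine hIbdd Gsq (max M 0) hGsqm fun x hx => ?_
      rw [Real.norm_eq_abs, _root_.abs_of_nonneg (hGsq0 x)]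
      exact le_max_of_le_left hx.2.1
    have hIGsq2 : IntegrableOn (fun x => Gsq x ^ 2) E volume := by
      refine hIbdd _ ((max M 0) ^ 2) (hGsqm.pow_const 2) fun x hx => ?_
      rw [Real.norm_eq_abs, _root_.abs_of_nonneg (by positivity)]
      have h1 : Gsq x ≤ max M 0 := le_max_of_le_left hx.2.1
      have h2 := hGsq0 x
      nlinarith
    have hImk : ∀ m k : Fin n, IntegrableOn (fun x => ‖G m k x‖ ^ 2) E volume := by
      intro m k
      refine hIbdd _ (max M 0) ((hGm m k).norm.pow_const 2) fun x hx => ?_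
      rw [Real.norm_eq_abs, _root_.abs_of_nonneg (by positivity)]
      exact le_trans (hsingle m k x) (le_max_of_le_left hx.2.1)
    -- test function
    set uu : Fin n → Fin n → ℝ → ℂ := fun m k => E.indicator (fun y => G m k y) with huudef
    have huum : ∀ m k, Measurable (uu m k) := fun m k => (hGm m k).indicator hEmeas
    have huumem : ∀ m k, MemLp (uu m k) 2 (volume.restrict (OmegaI N)) := fun m k =>
      (hGmem m k).indicator hEmeas
    set testf : LambdaSet N r → Mat n := fun lam' =>
      Matrix.of fun m k => ∫ x in OmegaI N, uu m k x * enegC ((lam' : ℝ)) x with htestdef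
    have htest_apply : ∀ (lam' : LambdaSet N r) (m k : Fin n),
        testf lam' m k = ∫ x in OmegaI N, uu m k x * enegC ((lam' : ℝ)) x := fun _ _ _ => rfl
    have hAP : ∀ m k : Fin n,
        Summable (fun lam : LambdaSet N r =>
          ‖∫ x in OmegaI N, uu m k x * enegC (lam : ℝ) x‖ ^ 2) ∧
        ∑' lam : LambdaSet N r, ‖∫ x in OmegaI N, uu m k x * enegC (lam : ℝ) x‖ ^ 2 =
          ∫ x in OmegaI N, ‖uu m k x‖ ^ 2 :=
      fun m k => lambda_parseval_sq N r hN hr_odd (huum m k) (huumem m k)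
    have htest_mem : MemL2 N r testf := by
      unfold MemL2
      exact (hasSum_sum (fun m _ => (hasSum_sum (fun k _ => ((hAP m k).1).hasSum)))).summable
    have hl2 : l2normSq N r testf = ∫ x in E, Gsq x := by
      unfold l2normSq
      rw [tsum_double_sum (fun m k lam => ‖testf lam m k‖ ^ 2) (fun m k => (hAP m k).1)]
      calc ∑ m, ∑ k, ∑' lam : LambdaSet N r, ‖testf lam m k‖ ^ 2
          = ∑ m, ∑ k, ∫ x in OmegaI N, ‖uu m k x‖ ^ 2 :=
            Finset.sum_congr rfl fun m _ => Finset.sum_congr rfl fun k _ => (hAP m k).2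
        _ = ∑ m, ∑ k, ∫ x in E, ‖G m k x‖ ^ 2 := by
            refine Finset.sum_congr rfl fun m _ => Finset.sum_congr rfl fun k _ => ?_
            have h1 : ∀ x, ‖uu m k x‖ ^ 2 = E.indicator (fun y => ‖G m k y‖ ^ 2) x := by
              intro x
              by_cases hx : x ∈ E <;>
                simp [huudef, Set.indicator_of_mem, Set.indicator_of_notMem, hx]
            calc ∫ x in OmegaI N, ‖uu m k x‖ ^ 2
                = ∫ x in OmegaI N, E.indicator (fun y => ‖G m k y‖ ^ 2) x :=
                  integral_congr_ae (Filter.Eventually.of_forall h1)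
              _ = ∫ x in OmegaI N ∩ E, ‖G m k x‖ ^ 2 := setIntegral_indicator hEmeas
              _ = ∫ x in E, ‖G m k x‖ ^ 2 := by rw [inter_eq_self_of_subset_right hEΩ]
        _ = ∫ x in E, Gsq x := by
            calc ∑ m, ∑ k, ∫ x in E, ‖G m k x‖ ^ 2
                = ∑ m, ∫ x in E, ∑ k, ‖G m k x‖ ^ 2 :=
                  Finset.sum_congr rfl fun m _ =>
                    (integral_finset_sum _ fun k _ => hImk m k).symm
              _ = ∫ x in E, ∑ m, ∑ k, ‖G m k x‖ ^ 2 :=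
                  (integral_finset_sum _ fun m _ =>
                    integrable_finset_sum _ fun k _ => hImk m k).symm
              _ = ∫ x in E, Gsq x := rfl
    -- the function wE = 1_E · Gsq
    set wE : ℝ → ℂ := E.indicator (fun y => ((Gsq y : ℝ) : ℂ)) with hwEdef
    have hwEm : Measurable wE := (Complex.measurable_ofReal.comp hGsqm).indicator hEmeas
    have hwEmem : MemLp wE 2 (volume.restrict (OmegaI N)) := by
      refine MemLp.of_bound hwEm.aestronglyMeasurable (max M 0) ?_
      filter_upwards with x
      by_cases hx : x ∈ E
      · rw [hwEdef, Set.indicator_of_mem hx]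
        rw [Complex.norm_real, Real.norm_eq_abs, _root_.abs_of_nonneg (hGsq0 x)]
        exact le_max_of_le_left hx.2.1
      · rw [hwEdef, Set.indicator_of_notMem hx]
        simp only [norm_zero]
        exact le_max_right _ _
    have hwcoef : ∀ (t : ℝ) (S : Set ℝ), MeasurableSet S → E ⊆ S →
        (∫ x in S, wE x * enegC t x) = ∫ x in E, ((Gsq x : ℝ) : ℂ) * enegC t x := by
      intro t S hS hES
      have h1 : ∀ x, wE x * enegC t x =
          E.indicator (fun y => ((Gsq y : ℝ) : ℂ) * enegC t y) x := by
        intro x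
        by_cases hx : x ∈ E <;>
          simp [hwEdef, Set.indicator_of_mem, Set.indicator_of_notMem, hx]
      calc (∫ x in S, wE x * enegC t x)
          = ∫ x in S, E.indicator (fun y => ((Gsq y : ℝ) : ℂ) * enegC t y) x :=
            integral_congr_ae (Filter.Eventually.of_forall h1)
        _ = ∫ x in S ∩ E, ((Gsq x : ℝ) : ℂ) * enegC t x := setIntegral_indicator hEmeas
        _ = _ := by rw [inter_eq_self_of_subset_right hES]
    -- the inner-product formula
    have hinner : ∀ lam : LambdaSet N r,
        l2inner N r testf (shift N r lam (fs j)) =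
          ∫ x in OmegaI N, wE x * enegC (2 * (N : ℝ) * (lam : ℝ)) x := by
      intro lam
      set vv : Fin n → Fin n → ℝ → ℂ :=
        fun m k x => G m k x * enegC (-(2 * (N : ℝ) * (lam : ℝ))) x with hvvdef
      have hvvm : ∀ m k, Measurable (vv m k) := fun m k => (hGm m k).mul (enegC_measurable _)
      have hvvmem : ∀ m k, MemLp (vv m k) 2 (volume.restrict (OmegaI N)) := fun m k =>
        memℒp_mul_enegC (hGm m k) (hGmem m k) _
      have hP := fun m k =>
        lambda_parseval N r hN hr_odd (huum m k) (hvvm m k) (huumem m k) (hvvmem m k)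
      have hIuv : ∀ m k : Fin n, Integrable
          (fun x => uu m k x * (starRingEnd ℂ) (vv m k x)) (volume.restrict (OmegaI N)) :=
        fun m k => integrable_mul_L2 (huumem m k) (memℒp_conj (hvvm m k) (hvvmem m k))
      have hshift : ∀ (lam' : LambdaSet N r) (m k : Fin n),
          shift N r lam (fs j) lam' m k = ∫ x in OmegaI N, vv m k x * enegC ((lam' : ℝ)) x := by
        intro lam' m k
        simp only [shift]
        rw [dif_pos (mem_lambda_sub N r hN lam lam')]
        rw [hinvG ⟨(lam' : ℝ) - 2 * (N : ℝ) * (lam : ℝ), mem_lambda_sub N r hN lam lam'⟩ m k]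
        apply setIntegral_congr_fun (omegaI_measurable N)
        intro x _
        calc G m k x * enegC (((⟨(lam' : ℝ) - 2 * (N : ℝ) * (lam : ℝ),
                mem_lambda_sub N r hN lam lam'⟩ : LambdaSet N r) : ℝ)) x
            = G m k x * (enegC (-(2 * (N : ℝ) * (lam : ℝ))) x * enegC ((lam' : ℝ)) x) := by
              rw [← enegC_freq_add,
                show -(2 * (N : ℝ) * (lam : ℝ)) + (lam' : ℝ) =
                  (lam' : ℝ) - 2 * (N : ℝ) * (lam : ℝ) by ring]
          _ = vv m k x * enegC ((lam' : ℝ)) x := by rw [hvvdef]; ring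
      unfold l2inner
      calc ∑' lam' : LambdaSet N r, ∑ m, ∑ k,
            testf lam' m k * (starRingEnd ℂ) (shift N r lam (fs j) lam' m k)
          = ∑' lam' : LambdaSet N r, ∑ m, ∑ k,
              (∫ x in OmegaI N, uu m k x * enegC ((lam' : ℝ)) x) *
                (starRingEnd ℂ) (∫ x in OmegaI N, vv m k x * enegC ((lam' : ℝ)) x) :=
            tsum_congr fun lam' => Finset.sum_congr rfl fun m _ =>
              Finset.sum_congr rfl fun k _ => by rw [htest_apply, hshift]
        _ = ∑ m, ∑ k, ∑' lam' : LambdaSet N r,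
              (∫ x in OmegaI N, uu m k x * enegC ((lam' : ℝ)) x) *
                (starRingEnd ℂ) (∫ x in OmegaI N, vv m k x * enegC ((lam' : ℝ)) x) :=
            tsum_double_sum _ (fun m k => (hP m k).1)
        _ = ∑ m, ∑ k, ∫ x in OmegaI N, uu m k x * (starRingEnd ℂ) (vv m k x) :=
            Finset.sum_congr rfl fun m _ => Finset.sum_congr rfl fun k _ => (hP m k).2
        _ = ∫ x in OmegaI N, ∑ m, ∑ k, uu m k x * (starRingEnd ℂ) (vv m k x) := by
            calc ∑ m, ∑ k, ∫ x in OmegaI N, uu m k x * (starRingEnd ℂ) (vv m k x)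
                = ∑ m, ∫ x in OmegaI N, ∑ k, uu m k x * (starRingEnd ℂ) (vv m k x) :=
                  Finset.sum_congr rfl fun m _ =>
                    (integral_finset_sum _ fun k _ => hIuv m k).symm
              _ = ∫ x in OmegaI N, ∑ m, ∑ k, uu m k x * (starRingEnd ℂ) (vv m k x) :=
                  (integral_finset_sum _ fun m _ =>
                    integrable_finset_sum _ fun k _ => hIuv m k).symm
        _ = ∫ x in OmegaI N, wE x * enegC (2 * (N : ℝ) * (lam : ℝ)) x := by
            refine integral_congr_ae (Filter.Eventually.of_forall fun x => ?_)
            by_cases hx : x ∈ E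
            · simp only [huudef, hvvdef, hwEdef, Set.indicator_of_mem hx, map_mul,
                enegC_conj, neg_neg]
              have hpull : ∀ (f : Fin n → Fin n → ℂ) (e : ℂ),
                  ∑ m, ∑ k, f m k * e = (∑ m, ∑ k, f m k) * e := by
                intro f e
                rw [Finset.sum_mul]
                exact Finset.sum_congr rfl fun m _ => (Finset.sum_mul _ _ _).symm
              calc ∑ m, ∑ k, G m k x * ((starRingEnd ℂ) (G m k x) *
                      enegC (2 * (N : ℝ) * (lam : ℝ)) x)
                  = ∑ m, ∑ k, ((‖G m k x‖ ^ 2 : ℝ) : ℂ) *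
                      enegC (2 * (N : ℝ) * (lam : ℝ)) x := by
                    refine Finset.sum_congr rfl fun m _ => Finset.sum_congr rfl fun k _ => ?_
                    rw [← mul_assoc, mul_conj_self_eq]
                _ = (∑ m, ∑ k, ((‖G m k x‖ ^ 2 : ℝ) : ℂ)) *
                      enegC (2 * (N : ℝ) * (lam : ℝ)) x :=
                    hpull _ _
                _ = ((Gsq x : ℝ) : ℂ) * enegC (2 * (N : ℝ) * (lam : ℝ)) x := by
                    congr 1
                    rw [hGsqdef]
                    push_cast
                    rfl
            · simp [huudef, hwEdef, Set.indicator_of_notMem hx]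
    -- summability of the Λ-family
    have hwsq := lambda_parseval_sq N r hN hr_odd hwEm hwEmem
    have hsumΛ : Summable (fun lam : LambdaSet N r =>
        ‖∫ x in OmegaI N, wE x * enegC (2 * (N : ℝ) * (lam : ℝ)) x‖ ^ 2) := by
      have hinj : Function.Injective (fun lam : LambdaSet N r =>
          (⟨2 * (N : ℝ) * (lam : ℝ), mem_lambda_twoN N r hN lam⟩ : LambdaSet N r)) := by
        intro a b hab
        have h2 : 2 * (N : ℝ) * (a : ℝ) = 2 * (N : ℝ) * (b : ℝ) := congrArg Subtype.val hab
        exact Subtype.ext (mul_left_cancel₀ (by positivity : (2 * (N : ℝ)) ≠ 0) h2)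
      have h0 : Summable ((fun lam'' : LambdaSet N r =>
          ‖∫ x in OmegaI N, wE x * enegC ((lam'' : ℝ)) x‖ ^ 2) ∘
          (fun lam : LambdaSet N r =>
            (⟨2 * (N : ℝ) * (lam : ℝ), mem_lambda_twoN N r hN lam⟩ : LambdaSet N r))) :=
        (hwsq.1).comp_injective hinj
      exact h0.congr fun lam => rfl
    have hψinj : Function.Injective (fun z : ℤ =>
        (⟨2 * (z : ℝ), mem_lambda_two N r z⟩ : LambdaSet N r)) := by
      intro z z' h
      have h2 : 2 * (z : ℝ) = 2 * (z' : ℝ) := congrArg Subtype.val h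
      have h3 : (z : ℝ) = (z' : ℝ) := by linarith
      exact_mod_cast h3
    have hfr : ∀ z : ℤ, (z : ℝ) / t0 = 2 * (N : ℝ) * (2 * (z : ℝ)) := by
      intro z
      rw [ht0def, div_eq_iff (by positivity : (1 / (4 * (N : ℝ))) ≠ 0)]
      field_simp
      ring
    have HJ := circle_parseval ht0 aJ hwEm hwEm
      (hwEmem.mono_measure (Measure.restrict_mono hJsub le_rfl))
      (hwEmem.mono_measure (Measure.restrict_mono hJsub le_rfl))
    have hcJ : ∀ z : ℤ, (∫ x in Ioc aJ (aJ + t0), wE x * enegC ((z : ℝ) / t0) x) =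
        ∫ x in OmegaI N, wE x * enegC (2 * (N : ℝ) *
          (((⟨2 * (z : ℝ), mem_lambda_two N r z⟩ : LambdaSet N r)) : ℝ)) x := by
      intro z
      show (∫ x in Ioc aJ (aJ + t0), wE x * enegC ((z : ℝ) / t0) x) =
        ∫ x in OmegaI N, wE x * enegC (2 * (N : ℝ) * (2 * (z : ℝ))) x
      rw [hwcoef _ _ measurableSet_Ioc hEJ, hwcoef _ _ (omegaI_measurable N) hEΩ, hfr z]
    -- Parseval on the small interval
    have hsq_eq : ∑' z : ℤ, ‖∫ x in Ioc aJ (aJ + t0), wE x * enegC ((z : ℝ) / t0) x‖ ^ 2 =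
        t0 * ∫ x in E, Gsq x ^ 2 := by
      apply Complex.ofReal_injective
      rw [Complex.ofReal_tsum]
      calc ∑' z : ℤ, ((‖∫ x in Ioc aJ (aJ + t0), wE x * enegC ((z : ℝ) / t0) x‖ ^ 2 : ℝ) : ℂ)
          = ∑' z : ℤ, (∫ x in Ioc aJ (aJ + t0), wE x * enegC ((z : ℝ) / t0) x) *
              (starRingEnd ℂ) (∫ x in Ioc aJ (aJ + t0), wE x * enegC ((z : ℝ) / t0) x) :=
            tsum_congr fun z => (mul_conj_self_eq _).symm
        _ = (t0 : ℂ) * ∫ x in Ioc aJ (aJ + t0), wE x * (starRingEnd ℂ) (wE x) := HJ.2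
        _ = (t0 : ℂ) * ∫ x in Ioc aJ (aJ + t0),
              ((E.indicator (fun y => Gsq y ^ 2) x : ℝ) : ℂ) := by
            congr 1
            refine integral_congr_ae (Filter.Eventually.of_forall fun x => ?_)
            by_cases hx : x ∈ E
            · simp only [hwEdef, Set.indicator_of_mem hx, Complex.conj_ofReal,
                ← Complex.ofReal_mul]
              rw [sq]
            · simp [hwEdef, Set.indicator_of_notMem hx]
        _ = (t0 : ℂ) * ((∫ x in Ioc aJ (aJ + t0),
              E.indicator (fun y => Gsq y ^ 2) x : ℝ) : ℂ) := by
            exact congrArg (fun z => (t0 : ℂ) * z)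
              (integral_ofReal (f := fun x => E.indicator (fun y => Gsq y ^ 2) x))
        _ = ((t0 * ∫ x in E, Gsq x ^ 2 : ℝ) : ℂ) := by
            rw [setIntegral_indicator hEmeas, inter_eq_self_of_subset_right hEJ]
            push_cast
            ring
    have hle1 : ∑' z : ℤ, ‖∫ x in Ioc aJ (aJ + t0), wE x * enegC ((z : ℝ) / t0) x‖ ^ 2 ≤
        ∑' lam : LambdaSet N r,
          ‖∫ x in OmegaI N, wE x * enegC (2 * (N : ℝ) * (lam : ℝ)) x‖ ^ 2 := by
      have h2 := tsum_comp_le_tsum_of_inj hsumΛ (fun lam => by positivity) hψinj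
      refine le_trans (le_of_eq (tsum_congr fun z => ?_)) h2
      exact congrArg (fun s : ℂ => ‖s‖ ^ 2) (hcJ z)
    have hle2 : ∑' lam : LambdaSet N r,
        ‖∫ x in OmegaI N, wE x * enegC (2 * (N : ℝ) * (lam : ℝ)) x‖ ^ 2 ≤
        besselSum N r p fs testf := by
      unfold besselSum
      rw [show ∑' lam : LambdaSet N r,
          ‖∫ x in OmegaI N, wE x * enegC (2 * (N : ℝ) * (lam : ℝ)) x‖ ^ 2 =
          ∑' lam : LambdaSet N r, ‖l2inner N r testf (shift N r lam (fs j))‖ ^ 2 from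
        tsum_congr fun lam => by rw [hinner lam]]
      exact Finset.single_le_sum
        (f := fun j' => ∑' lam : LambdaSet N r,
          ‖l2inner N r testf (shift N r lam (fs j'))‖ ^ 2)
        (fun i _ => tsum_nonneg fun lam => by positivity) (Finset.mem_univ j)
    have hbes := hbessel testf htest_mem
    rw [hl2] at hbes
    -- real arithmetic
    have hIcl : cc * (volume E).toReal ≤ ∫ x in E, Gsq x :=
      setIntegral_ge_of_const_le_real hEmeas hEfin' (fun x hx => hx.2.2) hIGsq
    have hmon : cc * ∫ x in E, Gsq x ≤ ∫ x in E, Gsq x ^ 2 := by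
      rw [← integral_const_mul]
      refine setIntegral_mono_on (hIGsq.const_mul cc) hIGsq2 hEmeas fun x hx => ?_
      have h1 := hx.2.2
      have h2 := hGsq0 x
      nlinarith
    have echain : t0 * ∫ x in E, Gsq x ^ 2 ≤ b₀ * ∫ x in E, Gsq x := by
      rw [← hsq_eq]
      exact le_trans hle1 (le_trans hle2 hbes)
    have hint0 : ∫ x in E, Gsq x ≤ 0 := by
      have h4N : 0 < 4 * (N : ℝ) := by positivity
      have e2 : (∫ x in E, Gsq x ^ 2) = (4 * (N : ℝ)) * (t0 * ∫ x in E, Gsq x ^ 2) := by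
        rw [ht0def]
        field_simp
      nlinarith [echain, hmon]
    have htr0 : (volume E).toReal = 0 := by
      have h2 : 0 ≤ (volume E).toReal := ENNReal.toReal_nonneg
      have h3 : 0 < cc := lt_of_le_of_lt (by positivity) hcc
      nlinarith [hIcl, hint0]
    rcases (ENNReal.toReal_eq_zero_iff _).mp htr0 with h | h
    · exact h
    · exact absurd h hEfin'
  -- ══ covering argument ══
  have hconv : ((2 * N : ℕ) : ℝ) * t0 = 1 / 2 := by
    push_cast
    rw [ht0def]
    field_simp
    ring
  have hcover : ∀ x ∈ OmegaI N, ∃ (b : Bool) (i : ℕ),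
      x ∈ Ioc ((if b then 0 else (N : ℝ) / 2) + (i : ℝ) * t0)
        ((if b then 0 else (N : ℝ) / 2) + (i : ℝ) * t0 + t0) ∧
      Ioc ((if b then 0 else (N : ℝ) / 2) + (i : ℝ) * t0)
        ((if b then 0 else (N : ℝ) / 2) + (i : ℝ) * t0 + t0) ⊆ OmegaI N := by
    intro x hx
    rcases hx with h | h
    · have h' : x ∈ Ioc (0 : ℝ) (0 + ((2 * N : ℕ) : ℝ) * t0) := by
        rw [hconv, zero_add]
        exact h
      obtain ⟨i, _, hmem, hsub⟩ := Ioc_cover_exists ht0 0 (2 * N) x h'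
      refine ⟨true, i, by simpa using hmem, fun y hy => Or.inl ?_⟩
      have hy' := hsub (by simpa using hy)
      rwa [hconv, zero_add] at hy'
    · have h' : x ∈ Ioc ((N : ℝ) / 2) ((N : ℝ) / 2 + ((2 * N : ℕ) : ℝ) * t0) := by
        rw [hconv]
        exact h
      obtain ⟨i, _, hmem, hsub⟩ := Ioc_cover_exists ht0 ((N : ℝ) / 2) (2 * N) x h'
      refine ⟨false, i, by simpa using hmem, fun y hy => Or.inr ?_⟩
      have hy' := hsub (by simpa using hy)
      rwa [hconv] at hy'
  set badP : Bool × ℕ × ℕ × ℕ → Set ℝ := fun q =>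
    if Ioc ((if q.1 then 0 else (N : ℝ) / 2) + (q.2.1 : ℝ) * t0)
        ((if q.1 then 0 else (N : ℝ) / 2) + (q.2.1 : ℝ) * t0 + t0) ⊆ OmegaI N then
      {x | x ∈ Ioc ((if q.1 then 0 else (N : ℝ) / 2) + (q.2.1 : ℝ) * t0)
          ((if q.1 then 0 else (N : ℝ) / 2) + (q.2.1 : ℝ) * t0 + t0) ∧
        Gsq x ≤ (q.2.2.2 : ℝ) ∧ 4 * (N : ℝ) * b₀ + 1 / ((q.2.2.1 : ℝ) + 1) ≤ Gsq x}
    else ∅ with hbadPdef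
  have hbad0 : ∀ q, volume (badP q) = 0 := by
    intro q
    rw [hbadPdef]
    dsimp only
    by_cases hq : Ioc ((if q.1 then 0 else (N : ℝ) / 2) + (q.2.1 : ℝ) * t0)
        ((if q.1 then 0 else (N : ℝ) / 2) + (q.2.1 : ℝ) * t0 + t0) ⊆ OmegaI N
    · rw [if_pos hq]
      exact key _ hq _ _ (lt_add_of_pos_right _ (by positivity))
    · rw [if_neg hq]
      exact measure_empty
  have hbadnull : volume {x | x ∈ OmegaI N ∧ 4 * (N : ℝ) * b₀ < Gsq x} = 0 := by
    refine measure_mono_null ?_ ((measure_iUnion_null_iff).mpr hbad0)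
    rintro x ⟨hxΩ, hxb⟩
    obtain ⟨b, i, hmem, hsub⟩ := hcover x hxΩ
    obtain ⟨qq, hqq⟩ := exists_nat_one_div_lt
      (show (0 : ℝ) < Gsq x - 4 * (N : ℝ) * b₀ by linarith)
    refine mem_iUnion.mpr ⟨(b, i, qq, ⌈Gsq x⌉₊), ?_⟩
    rw [hbadPdef]
    dsimp only
    rw [if_pos hsub]
    exact ⟨hmem, Nat.le_ceil _, by linarith [hqq]⟩
  -- ══ conclusion ══
  rw [show volume.restrict (OmegaSet N) = volume.restrict (OmegaI N) from hrest]
  have hae1 : ∀ᵐ x ∂(volume.restrict (OmegaI N)), Gsq x ≤ 4 * (N : ℝ) * b₀ := by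
    rw [ae_restrict_iff' (omegaI_measurable N), ae_iff]
    refine measure_mono_null ?_ hbadnull
    intro x hx
    simp only [Set.mem_setOf_eq] at hx ⊢
    push_neg at hx
    exact ⟨hx.1, hx.2⟩
  have hae2 : ∀ᵐ x ∂(volume.restrict (OmegaI N)), ∀ (m k : Fin n), F x m k = G m k x := by
    rw [ae_all_iff]
    intro m
    rw [ae_all_iff]
    intro k
    exact hGae m k
  filter_upwards [hae1, hae2] with x hx1 hx2
  have hsum_eq : (∑ m, ∑ k, ‖F x m k‖ ^ 2) = Gsq x := by
    rw [hGsqdef]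
    exact Finset.sum_congr rfl fun m _ => Finset.sum_congr rfl fun k _ => by rw [hx2 m k]
  constructor
  · rw [hsum_eq]
    exact hx1
  · unfold frobNorm
    rw [hsum_eq]
    calc Real.sqrt (Gsq x) ≤ Real.sqrt (4 * (N : ℝ) * b₀) := Real.sqrt_le_sqrt hx1
      _ = 2 * Real.sqrt ((N : ℝ) * b₀) := by
          rw [show (4 : ℝ) * (N : ℝ) * b₀ = 2 ^ 2 * ((N : ℝ) * b₀) by ring,
            Real.sqrt_mul (by positivity) _, Real.sqrt_sq (by norm_num : (0 : ℝ) ≤ 2)]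
end

section
/- The family of functions {x ↦ e^{2πiλx} χ_Ω(x)}_{λ∈Λ} is a complete orthonormal system (orthonormal basis) of the Hilbert space L²(Ω); that is, (Ω, Λ) is a spectral pair. -/
open MeasureTheory Complex Real Classical

noncomputable section

namespace SP

/-- the exponential `e^{2πi λ x}` -/
def ee (lam : ℝ) : ℝ → ℂ := fun x => Complex.exp (((2 * π * lam * x : ℝ) : ℂ) * Complex.I)

lemma ee_continuous (lam : ℝ) : Continuous (ee lam) := by
  unfold ee; fun_prop

lemma ee_norm (lam x : ℝ) : ‖ee lam x‖ = 1 := by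
  simp only [ee, Complex.norm_exp_ofReal_mul_I]

lemma ee_ne_zero (lam x : ℝ) : ee lam x ≠ 0 := Complex.exp_ne_zero _

lemma conj_ee (lam x : ℝ) : (starRingEnd ℂ) (ee lam x) = ee (-lam) x := by
  simp only [ee, ← Complex.exp_conj, map_mul, Complex.conj_ofReal, Complex.conj_I]
  congr 1
  push_cast
  ring

lemma ee_mul (a b x : ℝ) : ee a x * ee b x = ee (a + b) x := by
  simp only [ee, ← Complex.exp_add]
  congr 1
  push_cast
  ring

lemma ee_shift (d c x : ℝ) :
    ee d (x + c) = Complex.exp (((2 * π * d * c : ℝ) : ℂ) * Complex.I) * ee d x := by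
  simp only [ee, ← Complex.exp_add]
  congr 1
  push_cast
  ring

lemma exp_two_pi_int (m : ℤ) : Complex.exp (((2 * π * (m : ℝ) : ℝ) : ℂ) * Complex.I) = 1 := by
  have := Complex.exp_int_mul_two_pi_mul_I m
  rw [← this]
  congr 1
  push_cast
  ring

lemma exp_pi_odd (r : ℕ) (hr : Odd r) (s : ℝ) (hs : s = π * r) :
    Complex.exp ((s : ℂ) * Complex.I) = -1 := by
  obtain ⟨k, hk⟩ := hr
  subst hs hk
  have : ((π * ((2 * k + 1 : ℕ) : ℝ) : ℝ) : ℂ) * Complex.I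
      = (k : ℤ) * (2 * (π : ℂ) * Complex.I) + (π : ℂ) * Complex.I := by
    push_cast; ring
  rw [this, Complex.exp_add, Complex.exp_int_mul_two_pi_mul_I, Complex.exp_pi_mul_I]
  ring

lemma int_ee_Ico (d : ℝ) (a b : ℝ) :
    ∫ t in Set.Ico a b, ee d t = ∫ t in Set.Ioc a b, ee d t := by
  rw [integral_Ioc_eq_integral_Ioo, ← integral_Ico_eq_integral_Ioo]

lemma int_ee_zero (m : ℤ) (hm : m ≠ 0) : ∫ t in Set.Ico (0:ℝ) (1/2), ee (2 * m) t = 0 := by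
  rw [int_ee_Ico, ← intervalIntegral.integral_of_le (by norm_num : (0:ℝ) ≤ 1/2)]
  have hm' : (4 * π * (m:ℝ)) ≠ 0 :=
    mul_ne_zero (mul_ne_zero (by norm_num) Real.pi_ne_zero) (Int.cast_ne_zero.mpr hm)
  have hc : ((4 * π * (m:ℝ) : ℝ) : ℂ) * Complex.I ≠ 0 :=
    mul_ne_zero (Complex.ofReal_ne_zero.mpr hm') Complex.I_ne_zero
  have heq : ∀ t : ℝ, ee (2 * m) t = Complex.exp ((((4 * π * (m:ℝ) : ℝ)) : ℂ) * Complex.I * t) := by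
    intro t
    unfold ee
    congr 1
    push_cast
    ring
  simp_rw [heq]
  rw [integral_exp_mul_complex hc]
  have h1 : ((4 * π * (m:ℝ) : ℝ) : ℂ) * Complex.I * ((1:ℝ)/2 : ℝ) = ((2 * π * (m : ℝ) : ℝ) : ℂ) * Complex.I := by
    push_cast; ring
  have h0 : ((4 * π * (m:ℝ) : ℝ) : ℂ) * Complex.I * ((0:ℝ) : ℂ) = 0 := by
    push_cast; ring
  rw [show ((0:ℝ):ℂ) = ((0:ℝ):ℂ) from rfl] at h0
  rw [h1, h0, exp_two_pi_int m, Complex.exp_zero, sub_self, zero_div]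



-- ### Part 2 : Omega facts
variable {N : ℕ}

lemma omega_disjoint (hN : 1 ≤ N) :
    Disjoint (Set.Ico (0:ℝ) (1/2)) (Set.Ico ((N:ℝ)/2) (((N:ℝ)+1)/2)) := by
  rw [Set.disjoint_left]
  rintro x ⟨hx0, hx1⟩ ⟨hx2, hx3⟩
  have : (1:ℝ) ≤ N := by exact_mod_cast hN
  linarith

lemma omega_measurable (N : ℕ) : MeasurableSet (OmegaSet N) :=
  (measurableSet_Ico).union measurableSet_Ico

lemma omega_volume (hN : 1 ≤ N) : volume (OmegaSet N) = 1 := by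
  rw [OmegaSet, measure_union (omega_disjoint hN) measurableSet_Ico,
    Real.volume_Ico, Real.volume_Ico]
  rw [show (((N:ℝ)+1)/2 - (N:ℝ)/2) = 1/2 by ring]
  norm_num
  rw [← ENNReal.ofReal_add (by norm_num) (by norm_num)]
  norm_num

instance (N : ℕ) : IsFiniteMeasure (volume.restrict (OmegaSet N)) := by
  constructor
  rw [Measure.restrict_apply_univ]
  calc volume (OmegaSet N) ≤ volume (Set.Ico (0:ℝ) (1/2)) + volume (Set.Ico ((N:ℝ)/2) (((N:ℝ)+1)/2)) :=
        measure_union_le _ _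
    _ < ⊤ := by rw [Real.volume_Ico, Real.volume_Ico]; exact ENNReal.add_lt_top.mpr ⟨ENNReal.ofReal_lt_top, ENNReal.ofReal_lt_top⟩

lemma ee_memℒp (lam : ℝ) (N : ℕ) : MemLp (ee lam) 2 (volume.restrict (OmegaSet N)) :=
  MemLp.of_bound (ee_continuous lam).aestronglyMeasurable 1
    (Filter.Eventually.of_forall fun x => le_of_eq (ee_norm lam x))

lemma ee_integrableOn (lam : ℝ) {s : Set ℝ} (hs : MeasurableSet s) (hvol : volume s < ⊤) :
    IntegrableOn (ee lam) s volume := by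
  refine ⟨(ee_continuous lam).aestronglyMeasurable.restrict, ?_⟩
  refine HasFiniteIntegral.restrict_of_bounded (C := 1) hvol ?_
  exact Filter.Eventually.of_forall fun x => le_of_eq (ee_norm lam x)

lemma preimage_shift (N : ℕ) :
    (fun t : ℝ => t + (N:ℝ)/2) ⁻¹' Set.Ico ((N:ℝ)/2) (((N:ℝ)+1)/2) = Set.Ico (0:ℝ) (1/2) := by
  ext x
  simp only [Set.mem_preimage, Set.mem_Ico]
  constructor <;> rintro ⟨h1, h2⟩ <;> constructor <;> linarith

lemma preimage_shift_Ioc (N : ℕ) :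
    (fun t : ℝ => t + (N:ℝ)/2) ⁻¹' Set.Ioc ((N:ℝ)/2) (((N:ℝ)+1)/2) = Set.Ioc (0:ℝ) (1/2) := by
  ext x
  simp only [Set.mem_preimage, Set.mem_Ioc]
  constructor <;> rintro ⟨h1, h2⟩ <;> constructor <;> linarith

/-- change of variables for the second interval -/
lemma integral_second_piece (N : ℕ) (h : ℝ → ℂ) :
    ∫ x in Set.Ico ((N:ℝ)/2) (((N:ℝ)+1)/2), h x
      = ∫ t in Set.Ico (0:ℝ) (1/2), h (t + (N:ℝ)/2) := by
  have hemb : MeasurableEmbedding (fun t : ℝ => t + (N:ℝ)/2) := measurableEmbedding_addRight _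
  conv_lhs => rw [show (volume : Measure ℝ) = Measure.map (fun t : ℝ => t + (N:ℝ)/2) volume from
    (map_add_right_eq_self volume _).symm]
  rw [hemb.setIntegral_map]
  rw [preimage_shift]

/-- The key splitting: `∫_Ω e_d = (1 + e^{iπdN}) ∫_{[0,1/2)} e_d`. -/
lemma integral_omega_ee (hN : 1 ≤ N) (d : ℝ) :
    ∫ x in OmegaSet N, ee d x
      = (1 + Complex.exp (((π * d * N : ℝ) : ℂ) * Complex.I)) * ∫ t in Set.Ico (0:ℝ) (1/2), ee d t := by
  rw [OmegaSet, setIntegral_union (omega_disjoint hN) measurableSet_Ico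
    (ee_integrableOn d measurableSet_Ico (by rw [Real.volume_Ico]; exact ENNReal.ofReal_lt_top))
    (ee_integrableOn d measurableSet_Ico (by rw [Real.volume_Ico]; exact ENNReal.ofReal_lt_top))]
  rw [integral_second_piece]
  have : ∀ t : ℝ, ee d (t + (N:ℝ)/2)
      = Complex.exp (((π * d * N : ℝ) : ℂ) * Complex.I) * ee d t := by
    intro t
    rw [ee_shift]
    congr 2
    push_cast
    ring
  simp_rw [this]
  rw [integral_const_mul]
  ring
-- ### Part 3 : orthonormality integrals
lemma exp_pi_odd_neg (r : ℕ) (hr : Odd r) (s : ℝ) (hs : s = -(π * r)) :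
    Complex.exp ((s : ℂ) * Complex.I) = -1 := by
  subst hs
  rw [Complex.ofReal_neg, neg_mul, Complex.exp_neg, exp_pi_odd r hr _ rfl, inv_neg, inv_one]

lemma ee_zero (x : ℝ) : ee 0 x = 1 := by
  simp [ee]

lemma integral_conj_ee_self (hN : 1 ≤ N) (a : ℝ) :
    ∫ x in OmegaSet N, (starRingEnd ℂ) (ee a x) * ee a x = 1 := by
  have : ∀ x : ℝ, (starRingEnd ℂ) (ee a x) * ee a x = 1 := by
    intro x
    rw [conj_ee, ee_mul, neg_add_cancel, ee_zero]
  simp_rw [this]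
  rw [setIntegral_const, measureReal_def, omega_volume hN, ENNReal.toReal_one, one_smul]

lemma lambda_cases {N r : ℕ} {a b : ℝ} (ha : a ∈ LambdaSet N r) (hb : b ∈ LambdaSet N r) :
    (∃ m : ℤ, -a + b = 2 * (m : ℝ)) ∨
    (∃ m : ℤ, -a + b = (r:ℝ)/(N:ℝ) + 2 * (m : ℝ) ∨ -a + b = -((r:ℝ)/(N:ℝ)) + 2 * (m : ℝ)) := by
  obtain ⟨z₁, h₁ | h₁⟩ := ha <;> obtain ⟨z₂, h₂ | h₂⟩ := hb
  · exact Or.inl ⟨z₂ - z₁, by subst h₁ h₂; push_cast; ring⟩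
  · exact Or.inr ⟨z₂ - z₁, Or.inl (by subst h₁ h₂; push_cast; ring)⟩
  · exact Or.inr ⟨z₂ - z₁, Or.inr (by subst h₁ h₂; push_cast; ring)⟩
  · exact Or.inl ⟨z₂ - z₁, by subst h₁ h₂; push_cast; ring⟩

lemma integral_conj_ee_ne {r : ℕ} (hN : 1 ≤ N) (hr_odd : Odd r) {a b : ℝ}
    (ha : a ∈ LambdaSet N r) (hb : b ∈ LambdaSet N r) (hne : a ≠ b) :
    ∫ x in OmegaSet N, (starRingEnd ℂ) (ee a x) * ee b x = 0 := by
  have hNne : (N:ℝ) ≠ 0 := Nat.cast_ne_zero.mpr (by omega)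
  have key : ∀ x : ℝ, (starRingEnd ℂ) (ee a x) * ee b x = ee (-a + b) x := by
    intro x; rw [conj_ee, ee_mul]
  simp_rw [key]
  rw [integral_omega_ee hN]
  have hd : -a + b ≠ 0 := by
    intro h
    apply hne
    linarith [h]
  rcases lambda_cases ha hb with ⟨m, hm⟩ | ⟨m, hm | hm⟩
  · -- difference is an even integer: second factor vanishes
    have hm0 : m ≠ 0 := by
      rintro rfl
      simp at hm
      exact hd hm
    rw [hm, int_ee_zero m hm0, mul_zero]
  · -- difference is r/N + 2m : first factor vanishes
    have : Complex.exp (((π * (-a + b) * N : ℝ) : ℂ) * Complex.I) = -1 := by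
      have harg : (π * (-a + b) * N : ℝ) = π * r + 2 * π * ((m * N : ℤ) : ℝ) := by
        rw [hm]
        field_simp
        push_cast
        ring
      rw [show (((π * (-a + b) * N : ℝ)) : ℂ) * Complex.I
          = ((π * (r:ℝ) : ℝ) : ℂ) * Complex.I + ((2 * π * ((m * N : ℤ) : ℝ) : ℝ) : ℂ) * Complex.I by
        rw [← add_mul, ← Complex.ofReal_add, harg]]
      rw [Complex.exp_add, exp_pi_odd r hr_odd _ rfl, exp_two_pi_int]
      ring
    rw [this]
    norm_num
  · -- difference is -(r/N) + 2m : first factor vanishes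
    have : Complex.exp (((π * (-a + b) * N : ℝ) : ℂ) * Complex.I) = -1 := by
      have harg : (π * (-a + b) * N : ℝ) = -(π * r) + 2 * π * ((m * N : ℤ) : ℝ) := by
        rw [hm]
        field_simp
        push_cast
        ring
      rw [show (((π * (-a + b) * N : ℝ)) : ℂ) * Complex.I
          = ((-(π * (r:ℝ)) : ℝ) : ℂ) * Complex.I + ((2 * π * ((m * N : ℤ) : ℝ) : ℝ) : ℂ) * Complex.I by
        rw [← add_mul, ← Complex.ofReal_add, harg]]
      rw [Complex.exp_add, exp_pi_odd_neg r hr_odd _ rfl, exp_two_pi_int]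
      ring
    rw [this]
    norm_num

-- ### Part 4 : Fourier uniqueness on (0, 1/2]
set_option maxHeartbeats 1000000 in
lemma vanish (f : ℝ → ℂ) (hf : Measurable f)
    (hmem : MemLp f 2 (volume.restrict (Set.Ioc (0:ℝ) (1/2))))
    (hc : ∀ n : ℤ, ∫ t in Set.Ioc (0:ℝ) (1/2), ee (2*n) t * f t = 0) :
    ∀ᵐ t ∂(volume.restrict (Set.Ioc (0:ℝ) (1/2))), f t = 0 := by
  haveI hT : Fact ((0:ℝ) < 1/2) := ⟨by norm_num⟩
  set g : AddCircle ((1:ℝ)/2) → ℂ := AddCircle.liftIoc ((1:ℝ)/2) 0 f with hg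
  have hgm : Measurable g := by
    rw [hg]
    unfold AddCircle.liftIoc
    have h₁ : Measurable ((Set.Ioc (0:ℝ) (0 + 1/2)).restrict f) :=
      hf.comp measurable_subtype_coe
    have h₂ : Measurable (AddCircle.equivIoc ((1:ℝ)/2) 0) :=
      (AddCircle.measurableEquivIoc ((1:ℝ)/2) 0).measurable
    exact h₁.comp h₂
  have hmk := AddCircle.measurePreserving_mk ((1:ℝ)/2) 0
  rw [zero_add] at hmk
  have hcomp : ∀ x ∈ Set.Ioc (0:ℝ) (1/2), g ((x : ℝ) : AddCircle ((1:ℝ)/2)) = f x := by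
    intro x hx
    exact AddCircle.liftIoc_coe_apply (by rwa [zero_add])
  have hae : (fun x : ℝ => g ((x : ℝ) : AddCircle ((1:ℝ)/2)))
      =ᵐ[volume.restrict (Set.Ioc (0:ℝ) (1/2))] f := by
    rw [Filter.EventuallyEq, ae_restrict_iff' measurableSet_Ioc]
    exact Filter.Eventually.of_forall hcomp
  have h1 : MemLp (fun x : ℝ => g ((x : ℝ) : AddCircle ((1:ℝ)/2))) 2
      (volume.restrict (Set.Ioc (0:ℝ) (1/2))) := hmem.ae_eq hae.symm
  have h2 : MemLp g 2 (volume : Measure (AddCircle ((1:ℝ)/2))) := by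
    rw [← hmk.map_eq]
    refine (memLp_map_measure_iff ?_ hmk.measurable.aemeasurable).mpr h1
    rw [hmk.map_eq]
    exact hgm.aestronglyMeasurable
  have hhaar : (AddCircle.haarAddCircle : Measure (AddCircle ((1:ℝ)/2)))
      = (ENNReal.ofReal (1/2))⁻¹ • (volume : Measure (AddCircle ((1:ℝ)/2))) := by
    rw [AddCircle.volume_eq_smul_haarAddCircle, smul_smul,
      ENNReal.inv_mul_cancel (by norm_num) ENNReal.ofReal_ne_top, one_smul]
  have h3 : MemLp g 2 (AddCircle.haarAddCircle : Measure (AddCircle ((1:ℝ)/2))) := by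
    rw [hhaar]
    exact h2.smul_measure (ENNReal.inv_ne_top.mpr (by norm_num))
  set F := h3.toLp g with hF
  have hrepr : ∀ n : ℤ, fourierCoeff (F : AddCircle ((1:ℝ)/2) → ℂ) n = 0 := by
    intro n
    have e1 : fourierCoeff (F : AddCircle ((1:ℝ)/2) → ℂ) n = fourierCoeff g n := by
      unfold fourierCoeff
      refine integral_congr_ae ?_
      filter_upwards [h3.coeFn_toLp] with t ht
      rw [ht]
    rw [e1, hg, fourierCoeff_liftIoc_eq, fourierCoeffOn_eq_integral]
    have e2 : ∫ x in (0:ℝ)..(0 + 1/2), (fourier (-n)) (x : AddCircle ((0:ℝ) + 1/2 - 0)) • f x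
        = ∫ x in Set.Ioc (0:ℝ) (1/2), ee (2 * (-n)) x * f x := by
      rw [intervalIntegral.integral_of_le (by norm_num : (0:ℝ) ≤ 0 + 1/2)]
      rw [show (0 + 1/2 : ℝ) = 1/2 by norm_num]
      refine setIntegral_congr_fun measurableSet_Ioc fun x hx => ?_
      rw [fourier_coe_apply, smul_eq_mul]
      congr 1
      unfold ee
      congr 1
      push_cast
      field_simp
      ring
    rw [e2]
    have h0 := hc (-n)
    push_cast at h0
    rw [h0, smul_zero]
  have hF0 : F = 0 := by
    have : fourierBasis.repr F = 0 := by
      ext n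
      simp only [fourierBasis_repr, hrepr n, lp.coeFn_zero, Pi.zero_apply]
    exact (LinearIsometryEquiv.map_eq_zero_iff _).mp this
  have hg0 : g =ᵐ[(AddCircle.haarAddCircle : Measure (AddCircle ((1:ℝ)/2)))] 0 := by
    refine (h3.coeFn_toLp.symm).trans ?_
    rw [← hF, hF0]
    exact Lp.coeFn_zero _ _ _
  have hg0' : g =ᵐ[(volume : Measure (AddCircle ((1:ℝ)/2)))] 0 := by
    have : ae (volume : Measure (AddCircle ((1:ℝ)/2)))
        = ae (AddCircle.haarAddCircle : Measure (AddCircle ((1:ℝ)/2))) := by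
      rw [AddCircle.volume_eq_smul_haarAddCircle]
      exact Measure.ae_ennreal_smul_measure_eq (by norm_num)  _
    rwa [Filter.EventuallyEq, this]
  rw [← hmk.map_eq] at hg0'
  have h5 := ae_eq_comp (hmk.measurable.aemeasurable) hg0'
  filter_upwards [hae, h5] with x hx1 hx2
  rw [← hx1]
  simpa using hx2
-- ### Part 5 : completeness
set_option maxHeartbeats 1000000 in
lemma complete_aux {N r : ℕ} (hN : 1 ≤ N) (hr_odd : Odd r)
    (u : Lp ℂ 2 (volume.restrict (OmegaSet N)))
    (h : ∀ lam ∈ LambdaSet N r, ∫ x in OmegaSet N, ee (-lam) x * (u : ℝ → ℂ) x = 0) :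
    (u : ℝ → ℂ) =ᵐ[volume.restrict (OmegaSet N)] 0 := by
  have hNne : (N:ℝ) ≠ 0 := Nat.cast_ne_zero.mpr (by omega)
  set U : ℝ → ℂ := (u : ℝ → ℂ) with hUdef
  have hUsm : StronglyMeasurable U := Lp.stronglyMeasurable u
  have hUm : Measurable U := hUsm.measurable
  set f : ℝ → ℝ := fun t => t + (N:ℝ)/2 with hfdef
  have hfm : Measurable f := measurable_id.add_const _
  have hfemb : MeasurableEmbedding f := measurableEmbedding_addRight _
  set V : ℝ → ℂ := fun t => U (f t) with hVdef
  have hVm : Measurable V := hUm.comp hfm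
  -- measure equalities
  have hmeq1 : volume.restrict (Set.Ico (0:ℝ) (1/2)) = volume.restrict (Set.Ioc (0:ℝ) (1/2)) :=
    Measure.restrict_congr_set (Ioo_ae_eq_Ico.symm.trans Ioo_ae_eq_Ioc)
  have hmeq2 : volume.restrict (Set.Ico ((N:ℝ)/2) (((N:ℝ)+1)/2))
      = volume.restrict (Set.Ioc ((N:ℝ)/2) (((N:ℝ)+1)/2)) :=
    Measure.restrict_congr_set (Ioo_ae_eq_Ico.symm.trans Ioo_ae_eq_Ioc)
  have hres : volume.restrict (Set.Ioc ((N:ℝ)/2) (((N:ℝ)+1)/2))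
      = Measure.map f (volume.restrict (Set.Ioc (0:ℝ) (1/2))) := by
    conv_lhs => rw [show (volume : Measure ℝ) = Measure.map f volume from
      (map_add_right_eq_self volume _).symm]
    rw [Measure.restrict_map hfm measurableSet_Ioc, preimage_shift_Ioc]
  -- MemLp facts
  have hU2 : MemLp U 2 (volume.restrict (OmegaSet N)) := Lp.memLp u
  have hUs1 : MemLp U 2 (volume.restrict (Set.Ioc (0:ℝ) (1/2))) := by
    rw [← hmeq1]
    exact hU2.mono_measure (Measure.restrict_mono Set.subset_union_left le_rfl)
  have hUs2 : MemLp U 2 (volume.restrict (Set.Ioc ((N:ℝ)/2) (((N:ℝ)+1)/2))) := by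
    rw [← hmeq2]
    exact hU2.mono_measure (Measure.restrict_mono Set.subset_union_right le_rfl)
  have hVs1 : MemLp V 2 (volume.restrict (Set.Ioc (0:ℝ) (1/2))) := by
    rw [hres] at hUs2
    exact (memLp_map_measure_iff (by rw [← hres]; exact hUm.aestronglyMeasurable)
      hfm.aemeasurable).mp hUs2
  -- integrability of products with unimodular functions
  have hprod : ∀ (c : ℝ) (W : ℝ → ℂ), Measurable W →
      MemLp W 2 (volume.restrict (Set.Ioc (0:ℝ) (1/2))) →
      Integrable (fun t => ee c t * W t) (volume.restrict (Set.Ioc (0:ℝ) (1/2))) := by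
    intro c W hWm hW2
    refine (MemLp.of_le hW2 ?_ ?_).integrable (by norm_num)
    · exact ((ee_continuous c).measurable.mul hWm).aestronglyMeasurable
    · refine Filter.Eventually.of_forall fun t => ?_
      rw [norm_mul, ee_norm, one_mul]
  -- Step 1 : split the vanishing integrals
  have hsplit : ∀ lam : ℝ, lam ∈ LambdaSet N r →
      (∫ t in Set.Ioc (0:ℝ) (1/2), ee (-lam) t * U t)
        + Complex.exp (((-(π * lam * (N:ℝ)) : ℝ) : ℂ) * Complex.I)
          * ∫ t in Set.Ioc (0:ℝ) (1/2), ee (-lam) t * V t = 0 := by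
    intro lam hlam
    have h0 := h lam hlam
    have hi : IntegrableOn (fun x => ee (-lam) x * U x) (OmegaSet N) volume := by
      refine (MemLp.of_le hU2 ?_ ?_).integrable (by norm_num)
      · exact ((ee_continuous (-lam)).measurable.mul hUm).aestronglyMeasurable
      · refine Filter.Eventually.of_forall fun t => ?_
        rw [norm_mul, ee_norm, one_mul]
    rw [OmegaSet] at h0 hi
    rw [setIntegral_union (omega_disjoint hN) measurableSet_Ico
      (hi.mono_set Set.subset_union_left) (hi.mono_set Set.subset_union_right)] at h0
    rw [integral_second_piece] at h0
    have hpt : ∀ t : ℝ, ee (-lam) (t + (N:ℝ)/2) * U (t + (N:ℝ)/2)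
        = Complex.exp (((-(π * lam * (N:ℝ)) : ℝ) : ℂ) * Complex.I) * (ee (-lam) t * V t) := by
      intro t
      rw [ee_shift]
      have : ((2 * π * -lam * ((N:ℝ)/2) : ℝ) : ℂ) = ((-(π * lam * (N:ℝ)) : ℝ) : ℂ) := by
        push_cast; ring
      rw [this, hVdef]
      ring
    simp_rw [hpt] at h0
    rw [integral_const_mul] at h0
    rw [hmeq1] at h0
    exact h0
  -- Step 2 : the even-frequency conditions
  have hA : ∀ n : ℤ, ∫ t in Set.Ioc (0:ℝ) (1/2), ee (2*(n:ℝ)) t * (U t + V t) = 0 := by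
    intro n
    have hmem : (2 * (((-n : ℤ)) : ℝ)) ∈ LambdaSet N r := ⟨-n, Or.inl rfl⟩
    have h1 := hsplit _ hmem
    have e1 : -(2 * (((-n : ℤ)) : ℝ)) = 2*(n:ℝ) := by push_cast; ring
    rw [e1] at h1
    have e2 : Complex.exp (((-(π * (2 * (((-n : ℤ)) : ℝ)) * (N:ℝ)) : ℝ) : ℂ) * Complex.I) = 1 := by
      have : (-(π * (2 * (((-n : ℤ)) : ℝ)) * (N:ℝ)) : ℝ) = 2 * π * (((n * N : ℤ)) : ℝ) := by
        push_cast; ring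
      rw [this, exp_two_pi_int]
    rw [e2, one_mul] at h1
    rw [← integral_add (hprod _ _ hUm hUs1) (hprod _ _ hVm hVs1)] at h1
    rw [← h1]
    refine integral_congr_ae (Filter.Eventually.of_forall fun t => ?_)
    ring
  -- Step 3 : the odd-frequency conditions
  have hB : ∀ n : ℤ, ∫ t in Set.Ioc (0:ℝ) (1/2),
      ee (2*(n:ℝ)) t * (ee (-((r:ℝ)/(N:ℝ))) t * (U t - V t)) = 0 := by
    intro n
    have hmem : ((r:ℝ)/(N:ℝ) + 2 * (((-n : ℤ)) : ℝ)) ∈ LambdaSet N r := ⟨-n, Or.inr rfl⟩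
    have h1 := hsplit _ hmem
    have e1 : ∀ t : ℝ, ee (-((r:ℝ)/(N:ℝ) + 2 * (((-n : ℤ)) : ℝ))) t
        = ee (2*(n:ℝ)) t * ee (-((r:ℝ)/(N:ℝ))) t := by
      intro t
      rw [ee_mul]
      congr 1
      push_cast; ring
    have e2 : Complex.exp (((-(π * ((r:ℝ)/(N:ℝ) + 2 * (((-n : ℤ)) : ℝ)) * (N:ℝ)) : ℝ) : ℂ)
        * Complex.I) = -1 := by
      have harg : (-(π * ((r:ℝ)/(N:ℝ) + 2 * (((-n : ℤ)) : ℝ)) * (N:ℝ)) : ℝ)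
          = -(π * (r:ℝ)) + 2 * π * (((n * N : ℤ)) : ℝ) := by
        push_cast
        field_simp
        ring
      rw [show ((-(π * ((r:ℝ)/(N:ℝ) + 2 * (((-n : ℤ)) : ℝ)) * (N:ℝ)) : ℝ) : ℂ) * Complex.I
          = ((-(π * (r:ℝ)) : ℝ) : ℂ) * Complex.I
            + ((2 * π * (((n * N : ℤ)) : ℝ) : ℝ) : ℂ) * Complex.I by
        rw [← add_mul, ← Complex.ofReal_add, harg]]
      rw [Complex.exp_add, exp_pi_odd_neg r hr_odd _ rfl, exp_two_pi_int]
      ring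
    simp_rw [e1] at h1
    rw [e2] at h1
    have assocU : ∫ t in Set.Ioc (0:ℝ) (1/2), (ee (2*(n:ℝ)) t * ee (-((r:ℝ)/(N:ℝ))) t) * U t
        = ∫ t in Set.Ioc (0:ℝ) (1/2), ee (2*(n:ℝ)) t * (ee (-((r:ℝ)/(N:ℝ))) t * U t) :=
      integral_congr_ae (Filter.Eventually.of_forall fun t => mul_assoc _ _ _)
    have assocV : ∫ t in Set.Ioc (0:ℝ) (1/2), (ee (2*(n:ℝ)) t * ee (-((r:ℝ)/(N:ℝ))) t) * V t
        = ∫ t in Set.Ioc (0:ℝ) (1/2), ee (2*(n:ℝ)) t * (ee (-((r:ℝ)/(N:ℝ))) t * V t) :=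
      integral_congr_ae (Filter.Eventually.of_forall fun t => mul_assoc _ _ _)
    rw [assocU, assocV] at h1
    have hBU := hprod (2*(n:ℝ)) (fun t => ee (-((r:ℝ)/(N:ℝ))) t * U t)
      ((ee_continuous _).measurable.mul hUm)
      (by
        refine MemLp.of_le hUs1 ((ee_continuous _).measurable.mul hUm).aestronglyMeasurable ?_
        exact Filter.Eventually.of_forall fun t => by rw [norm_mul, ee_norm, one_mul])
    have hBV := hprod (2*(n:ℝ)) (fun t => ee (-((r:ℝ)/(N:ℝ))) t * V t)
      ((ee_continuous _).measurable.mul hVm)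
      (by
        refine MemLp.of_le hVs1 ((ee_continuous _).measurable.mul hVm).aestronglyMeasurable ?_
        exact Filter.Eventually.of_forall fun t => by rw [norm_mul, ee_norm, one_mul])
    have h2 : (∫ t in Set.Ioc (0:ℝ) (1/2), ee (2*(n:ℝ)) t * (ee (-((r:ℝ)/(N:ℝ))) t * U t))
        - ∫ t in Set.Ioc (0:ℝ) (1/2), ee (2*(n:ℝ)) t * (ee (-((r:ℝ)/(N:ℝ))) t * V t) = 0 := by
      linear_combination h1
    rw [← integral_sub hBU hBV] at h2
    rw [← h2]
    refine integral_congr_ae (Filter.Eventually.of_forall fun t => ?_)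
    ring
  -- Step 4 : apply Fourier uniqueness
  have hA0 := vanish (fun t => U t + V t) (hUm.add hVm) (hUs1.add hVs1) hA
  have hB0 := vanish (fun t => ee (-((r:ℝ)/(N:ℝ))) t * (U t - V t))
    ((ee_continuous _).measurable.mul (hUm.sub hVm))
    (by
      refine MemLp.of_le (hUs1.sub hVs1)
        ((ee_continuous _).measurable.mul (hUm.sub hVm)).aestronglyMeasurable ?_
      exact Filter.Eventually.of_forall fun t => by
        rw [norm_mul, ee_norm, one_mul, Pi.sub_apply])
    hB
  have hU0 : ∀ᵐ t ∂(volume.restrict (Set.Ioc (0:ℝ) (1/2))), U t = 0 ∧ V t = 0 := by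
    filter_upwards [hA0, hB0] with t h1 h2
    have h3 : U t - V t = 0 := by
      rcases mul_eq_zero.mp h2 with h | h
      · exact absurd h (ee_ne_zero _ _)
      · exact h
    constructor
    · linear_combination (h1 + h3) / 2
    · linear_combination (h1 - h3) / 2
  have hU0s1 : U =ᵐ[volume.restrict (Set.Ioc (0:ℝ) (1/2))] 0 := hU0.mono fun t ht => ht.1
  have hV0 : ∀ᵐ t ∂(volume.restrict (Set.Ioc (0:ℝ) (1/2))), U (f t) = 0 :=
    hU0.mono fun t ht => ht.2
  have hU0s2 : U =ᵐ[volume.restrict (Set.Ioc ((N:ℝ)/2) (((N:ℝ)+1)/2))] 0 := by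
    rw [hres, Filter.EventuallyEq]
    refine (ae_map_iff hfm.aemeasurable ?_).mpr ?_
    · exact hUm (measurableSet_singleton 0)
    · exact hV0
  have hrestr : (volume.restrict (OmegaSet N))
      = volume.restrict (Set.Ico (0:ℝ) (1/2))
        + volume.restrict (Set.Ico ((N:ℝ)/2) (((N:ℝ)+1)/2)) := by
    rw [OmegaSet]
    exact Measure.restrict_union (omega_disjoint hN) measurableSet_Ico
  rw [Filter.EventuallyEq, hrestr, ae_add_measure_iff]
  constructor
  · rw [hmeq1]; exact hU0s1
  · rw [hmeq2]; exact hU0s2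

end SP

end

/-- Example 1.2 / exp12: `(Ω, Λ)` is a spectral pair, i.e. the family
`{e^{2πiλ·} χ_Ω}_{λ∈Λ}` is a complete orthonormal system (orthonormal basis) of `L²(Ω)`
(here realized as `Lp ℂ 2` of Lebesgue measure restricted to `Ω`; note `|Ω| = 1`). -/
theorem spectral_pair
    (N r : ℕ) (hN : 1 ≤ N) (hr_odd : Odd r) (hr_cop : Nat.Coprime r N)
    (hr1 : 1 ≤ r) (hr2 : r ≤ 2 * N - 1) :
    ∃ e : LambdaSet N r → Lp ℂ 2 (volume.restrict (OmegaSet N)),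
      (∀ lam : LambdaSet N r,
        (e lam : ℝ → ℂ) =ᵐ[volume.restrict (OmegaSet N)]
          fun x => Complex.exp (((2 * π * (lam : ℝ) * x : ℝ) : ℂ) * Complex.I)) ∧
      Orthonormal ℂ e ∧
      (Submodule.span ℂ (Set.range e)).topologicalClosure = ⊤ := by
  classical
  refine ⟨fun lam => (SP.ee_memℒp (lam : ℝ) N).toLp (SP.ee (lam : ℝ)), ?_, ?_, ?_⟩
  · intro lam
    exact (SP.ee_memℒp (lam : ℝ) N).coeFn_toLp
  · rw [orthonormal_iff_ite]
    intro i j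
    have hcoe : (inner ℂ ((SP.ee_memℒp (i : ℝ) N).toLp (SP.ee (i : ℝ)))
          ((SP.ee_memℒp (j : ℝ) N).toLp (SP.ee (j : ℝ))) : ℂ)
        = ∫ x in OmegaSet N, (starRingEnd ℂ) (SP.ee (i : ℝ) x) * SP.ee (j : ℝ) x := by
      rw [MeasureTheory.L2.inner_def]
      refine integral_congr_ae ?_
      filter_upwards [(SP.ee_memℒp (i : ℝ) N).coeFn_toLp, (SP.ee_memℒp (j : ℝ) N).coeFn_toLp]
        with x h1 h2
      rw [h1, h2, RCLike.inner_apply']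
    by_cases hij : i = j
    · subst hij
      rw [if_pos rfl, hcoe, SP.integral_conj_ee_self hN]
    · rw [if_neg hij, hcoe]
      exact SP.integral_conj_ee_ne hN hr_odd i.2 j.2 fun hv => hij (Subtype.ext hv)
  · rw [Submodule.topologicalClosure_eq_top_iff, Submodule.eq_bot_iff]
    intro u hu
    have key : ∀ lam ∈ LambdaSet N r,
        ∫ x in OmegaSet N, SP.ee (-lam) x * (u : ℝ → ℂ) x = 0 := by
      intro lam hlam
      have h1 : (inner ℂ ((SP.ee_memℒp ((⟨lam, hlam⟩ : LambdaSet N r) : ℝ) N).toLp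
            (SP.ee ((⟨lam, hlam⟩ : LambdaSet N r) : ℝ))) u : ℂ) = 0 :=
        (Submodule.mem_orthogonal _ u).mp hu _
          (Submodule.subset_span ⟨(⟨lam, hlam⟩ : LambdaSet N r), rfl⟩)
      rw [MeasureTheory.L2.inner_def] at h1
      rw [← h1]
      refine integral_congr_ae ?_
      filter_upwards [(SP.ee_memℒp lam N).coeFn_toLp] with x h2
      rw [RCLike.inner_apply', h2, SP.conj_ee]
    have hzero := SP.complete_aux hN hr_odd u key
    exact Lp.eq_zero_iff_ae_eq_zero.mpr hzero
end
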